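/- arXiv:1609.01897 — 7 statements merged into one kernel-verified Lean document; each statement's English description precedes it below -/
import Mathlib

section
/- Let (K,d) be a compact geodesic metric space, let ε > 0, and let n ∈ ℕ with n ≥ 1. If ψᵏ = (ψᵏ_L, ψᵏ_M) : [0, nε] → K × K, k ∈ ℕ, is a sequence of good curves, then there is a subsequence converging uniformly (with respect to the max metric ρ((A₁,A₂),(B₁,B₂)) = max{d(A₁,B₁), d(A₂,B₂)} on K × K) to a curve ψ = (ψ_L, ψ_M) : [0, nε] → K × K which is again a good curve. -/
open Filter Topology

variable {K : Type*} [MetricSpace K]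

/-- `C` lies between `A` and `B`, i.e. `d(A,C) + d(C,B) = d(A,B)`. -/
def LiesBetween (C A B : K) : Prop := dist A C + dist C B = dist A B

/-- `γ` is a geodesic path on `[a, b]`: `d(γ t, γ t') = |t - t'|` for `t, t' ∈ [a,b]`. -/
def IsGeodPath (γ : ℝ → K) (a b : ℝ) : Prop :=
  ∀ t ∈ Set.Icc a b, ∀ t' ∈ Set.Icc a b, dist (γ t) (γ t') = |t - t'|

/-- A geodesic space: every pair of points is joined by a geodesic path. -/
def GeodesicSpace (K : Type*) [MetricSpace K] : Prop :=
  ∀ A B : K, ∃ (a b : ℝ) (γ : ℝ → K), a ≤ b ∧ IsGeodPath γ a b ∧ γ a = A ∧ γ b = B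

/-- The betweenness property: for pairwise distinct `A B C D`, if `B` lies between
`A` and `C`, and `C` lies between `B` and `D`, then `B` and `C` lie between `A` and `D`. -/
def BetweennessProperty (K : Type*) [MetricSpace K] : Prop :=
  ∀ A B C D : K, A ≠ B → A ≠ C → A ≠ D → B ≠ C → B ≠ D → C ≠ D →
    LiesBetween B A C → LiesBetween C B D →
    LiesBetween B A D ∧ LiesBetween C A D

/-- A good curve `(L, M) : [aε, bε] → K × K` (with `τᵢ = iε`). -/
def GoodCurve (ε : ℝ) (a b : ℕ) (L M : ℝ → K) : Prop :=
  LipschitzOnWith 1 L (Set.Icc ((a : ℝ) * ε) ((b : ℝ) * ε)) ∧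
  LipschitzOnWith 1 M (Set.Icc ((a : ℝ) * ε) ((b : ℝ) * ε)) ∧
  (∀ i : ℕ, a ≤ i → i < b →
    LiesBetween (L (((i : ℝ) + 1) * ε)) (L ((i : ℝ) * ε)) (M ((i : ℝ) * ε))) ∧
  (∀ i : ℕ, a ≤ i → i < b → dist (L ((i : ℝ) * ε)) (L (((i : ℝ) + 1) * ε)) = ε) ∧
  (∀ i : ℕ, a ≤ i → i ≤ b → ε ≤ dist (L ((i : ℝ) * ε)) (M ((i : ℝ) * ε)))

/-- In a compact geodesic space, a sequence of good curves on `[0, nε]` has a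
subsequence converging uniformly (in the max metric on `K × K`) to a good curve. -/
theorem stmt_3 {K : Type*} [MetricSpace K] [CompactSpace K] (hK : GeodesicSpace K)
    (ε : ℝ) (hε : 0 < ε) (n : ℕ) (hn : 1 ≤ n)
    (ψL ψM : ℕ → ℝ → K) (hψ : ∀ k, GoodCurve ε 0 n (ψL k) (ψM k)) :
    ∃ φ : ℕ → ℕ, StrictMono φ ∧ ∃ gL gM : ℝ → K, GoodCurve ε 0 n gL gM ∧
      TendstoUniformlyOn (fun k t => (ψL (φ k) t, ψM (φ k) t))
        (fun t => (gL t, gM t)) atTop (Set.Icc 0 ((n : ℝ) * ε)) := by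
  classical
  have hle : (0:ℝ) ≤ (n : ℝ) * ε := mul_nonneg (Nat.cast_nonneg n) hε.le
  set S : Set ℝ := Set.Icc 0 ((n : ℝ) * ε) with hS
  haveI : CompactSpace S := isCompact_iff_compactSpace.mp isCompact_Icc
  -- Each pair curve restricted to S is 1-Lipschitz
  have hLip : ∀ k, LipschitzWith 1 (fun x : S => (ψL k x, ψM k x)) := by
    intro k
    have hL : LipschitzOnWith 1 (ψL k) S := by
      have := (hψ k).1; simpa [hS] using this
    have hM : LipschitzOnWith 1 (ψM k) S := by
      have := (hψ k).2.1; simpa [hS] using this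
    have := (hL.to_restrict).prodMk (hM.to_restrict)
    simpa using this
  -- Bundle as bounded continuous functions
  let F : ℕ → (BoundedContinuousFunction S (K × K)) := fun k =>
    BoundedContinuousFunction.mkOfCompact ⟨fun x : S => (ψL k x, ψM k x), (hLip k).continuous⟩
  -- The set of 1-Lipschitz bounded continuous functions is compact (Arzela-Ascoli)
  let A : Set (BoundedContinuousFunction S (K × K)) := {f | LipschitzWith 1 f}
  have hAclosed : IsClosed A := by
    have : A = ⋂ (x : S) (y : S),
        {f : BoundedContinuousFunction S (K × K) | dist (f x) (f y) ≤ dist x y} := by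
      ext f
      simp only [A, Set.mem_setOf_eq, Set.mem_iInter, lipschitzWith_iff_dist_le_mul,
        NNReal.coe_one, one_mul]
    rw [this]
    exact isClosed_iInter fun x => isClosed_iInter fun y =>
      isClosed_le (Continuous.dist (continuous_eval_const x)
        (continuous_eval_const y)) continuous_const
  have hAequi : Equicontinuous ((↑) : A → S → (K × K)) := by
    intro x
    rw [Metric.equicontinuousAt_iff]
    intro δ hδ
    refine ⟨δ, hδ, fun y hy f => ?_⟩
    have := f.2.dist_le_mul x y
    simp only [NNReal.coe_one, one_mul] at this
    calc dist (f.1 x) (f.1 y) ≤ dist x y := this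
      _ < δ := by rwa [dist_comm] at hy
  have hAcompact : IsCompact A :=
    BoundedContinuousFunction.arzela_ascoli₁ A hAclosed hAequi
  have hFmem : ∀ k, F k ∈ A := fun k => hLip k
  obtain ⟨g, hgA, φ, hφ, hconv0⟩ := hAcompact.tendsto_subseq hFmem
  -- uniform convergence
  have huc : TendstoUniformly (fun k (x : S) => (ψL (φ k) x, ψM (φ k) x))
      (fun x : S => g x) atTop := by
    have := BoundedContinuousFunction.tendsto_iff_tendstoUniformly.mp hconv0
    exact this
  -- the limit curves
  let gL : ℝ → K := fun t => (g (Set.projIcc 0 ((n : ℝ) * ε) hle t)).1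
  let gM : ℝ → K := fun t => (g (Set.projIcc 0 ((n : ℝ) * ε) hle t)).2
  have hgval : ∀ (t : ℝ) (ht : t ∈ S), (gL t, gM t) = g ⟨t, ht⟩ := by
    intro t ht
    simp only [gL, gM, Set.projIcc_of_mem hle ht]
  have hconv : TendstoUniformlyOn (fun k t => (ψL (φ k) t, ψM (φ k) t))
      (fun t => (gL t, gM t)) atTop S := by
    rw [tendstoUniformlyOn_iff_tendstoUniformly_comp_coe]
    have heq : ((fun t => (gL t, gM t)) ∘ ((↑) : S → ℝ)) = fun x : S => g x := by
      funext x
      exact hgval x.1 x.2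
    rw [heq]
    exact huc
  -- pointwise limits
  have tP : ∀ t ∈ S, Filter.Tendsto (fun k => (ψL (φ k) t, ψM (φ k) t)) atTop
      (𝓝 (gL t, gM t)) := fun t ht => hconv.tendsto_at ht
  have tL : ∀ t ∈ S, Filter.Tendsto (fun k => ψL (φ k) t) atTop (𝓝 (gL t)) :=
    fun t ht => (continuous_fst.tendsto _).comp (tP t ht)
  have tM : ∀ t ∈ S, Filter.Tendsto (fun k => ψM (φ k) t) atTop (𝓝 (gM t)) :=
    fun t ht => (continuous_snd.tendsto _).comp (tP t ht)
  -- memberships of the grid points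
  have hmem : ∀ i : ℕ, i ≤ n → (i : ℝ) * ε ∈ S := by
    intro i hi
    exact ⟨mul_nonneg (Nat.cast_nonneg i) hε.le,
      mul_le_mul_of_nonneg_right (Nat.cast_le.mpr hi) hε.le⟩
  have hmem' : ∀ i : ℕ, i < n → ((i : ℝ) + 1) * ε ∈ S := by
    intro i hi
    have : ((i : ℝ) + 1) = ((i + 1 : ℕ) : ℝ) := by push_cast; ring
    rw [this]
    exact hmem (i + 1) hi
  -- Lipschitz property of the limit
  have hgLip : LipschitzWith 1 g := hgA
  have hgLLip : LipschitzOnWith 1 gL S := by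
    rw [lipschitzOnWith_iff_dist_le_mul]
    intro x hx y hy
    have h1 : dist (gL x) (gL y) ≤ dist (g ⟨x, hx⟩) (g ⟨y, hy⟩) := by
      have e1 : gL x = (g ⟨x, hx⟩).1 := by simp only [gL, Set.projIcc_of_mem hle hx]
      have e2 : gL y = (g ⟨y, hy⟩).1 := by simp only [gL, Set.projIcc_of_mem hle hy]
      rw [e1, e2]
      rw [Prod.dist_eq]; exact le_max_left _ _
    have h2 := hgLip.dist_le_mul ⟨x, hx⟩ ⟨y, hy⟩
    simp only [NNReal.coe_one, one_mul, Subtype.dist_eq] at h2 ⊢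
    exact h1.trans h2
  have hgMLip : LipschitzOnWith 1 gM S := by
    rw [lipschitzOnWith_iff_dist_le_mul]
    intro x hx y hy
    have h1 : dist (gM x) (gM y) ≤ dist (g ⟨x, hx⟩) (g ⟨y, hy⟩) := by
      have e1 : gM x = (g ⟨x, hx⟩).2 := by simp only [gM, Set.projIcc_of_mem hle hx]
      have e2 : gM y = (g ⟨y, hy⟩).2 := by simp only [gM, Set.projIcc_of_mem hle hy]
      rw [e1, e2]
      rw [Prod.dist_eq]; exact le_max_right _ _
    have h2 := hgLip.dist_le_mul ⟨x, hx⟩ ⟨y, hy⟩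
    simp only [NNReal.coe_one, one_mul, Subtype.dist_eq] at h2 ⊢
    exact h1.trans h2
  refine ⟨φ, hφ, gL, gM, ⟨?_, ?_, ?_, ?_, ?_⟩, hconv⟩
  · simpa [hS] using hgLLip
  · simpa [hS] using hgMLip
  · -- betweenness
    intro i _ hi
    have m1 : (i : ℝ) * ε ∈ S := hmem i hi.le
    have m2 : ((i : ℝ) + 1) * ε ∈ S := hmem' i hi
    have hb : ∀ k, dist (ψL (φ k) ((i : ℝ) * ε)) (ψL (φ k) (((i : ℝ) + 1) * ε)) +
        dist (ψL (φ k) (((i : ℝ) + 1) * ε)) (ψM (φ k) ((i : ℝ) * ε)) =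
        dist (ψL (φ k) ((i : ℝ) * ε)) (ψM (φ k) ((i : ℝ) * ε)) :=
      fun k => (hψ (φ k)).2.2.1 i (Nat.zero_le i) hi
    have t1 : Filter.Tendsto (fun k => dist (ψL (φ k) ((i : ℝ) * ε)) (ψL (φ k) (((i : ℝ) + 1) * ε)) +
        dist (ψL (φ k) (((i : ℝ) + 1) * ε)) (ψM (φ k) ((i : ℝ) * ε))) atTop
        (𝓝 (dist (gL ((i : ℝ) * ε)) (gL (((i : ℝ) + 1) * ε)) +
          dist (gL (((i : ℝ) + 1) * ε)) (gM ((i : ℝ) * ε)))) :=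
      (((tL _ m1).dist (tL _ m2)).add ((tL _ m2).dist (tM _ m1)))
    have t2 : Filter.Tendsto (fun k => dist (ψL (φ k) ((i : ℝ) * ε)) (ψL (φ k) (((i : ℝ) + 1) * ε)) +
        dist (ψL (φ k) (((i : ℝ) + 1) * ε)) (ψM (φ k) ((i : ℝ) * ε))) atTop
        (𝓝 (dist (gL ((i : ℝ) * ε)) (gM ((i : ℝ) * ε)))) := by
      have := (tL _ m1).dist (tM _ m1)
      refine this.congr fun k => (hb k).symm
    exact tendsto_nhds_unique t1 t2
  · -- dist = ε
    intro i _ hi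
    have m1 : (i : ℝ) * ε ∈ S := hmem i hi.le
    have m2 : ((i : ℝ) + 1) * ε ∈ S := hmem' i hi
    have t1 : Filter.Tendsto (fun k => dist (ψL (φ k) ((i : ℝ) * ε)) (ψL (φ k) (((i : ℝ) + 1) * ε)))
        atTop (𝓝 (dist (gL ((i : ℝ) * ε)) (gL (((i : ℝ) + 1) * ε)))) :=
      (tL _ m1).dist (tL _ m2)
    have t2 : Filter.Tendsto (fun k => dist (ψL (φ k) ((i : ℝ) * ε)) (ψL (φ k) (((i : ℝ) + 1) * ε)))
        atTop (𝓝 ε) := by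
      have : (fun k => dist (ψL (φ k) ((i : ℝ) * ε)) (ψL (φ k) (((i : ℝ) + 1) * ε))) = fun _ => ε := by
        funext k; exact (hψ (φ k)).2.2.2.1 i (Nat.zero_le i) hi
      rw [this]; exact tendsto_const_nhds
    exact tendsto_nhds_unique t1 t2
  · -- dist ≥ ε
    intro i _ hi
    have m1 : (i : ℝ) * ε ∈ S := hmem i hi
    have t1 : Filter.Tendsto (fun k => dist (ψL (φ k) ((i : ℝ) * ε)) (ψM (φ k) ((i : ℝ) * ε)))
        atTop (𝓝 (dist (gL ((i : ℝ) * ε)) (gM ((i : ℝ) * ε)))) :=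
      (tL _ m1).dist (tM _ m1)
    exact ge_of_tendsto t1 (Filter.Eventually.of_forall fun k =>
      (hψ (φ k)).2.2.2.2 i (Nat.zero_le i) hi)
end

section
/- Let (K,d) be a geodesic metric space satisfying the betweenness property, let ε > 0, and let γ = (L, M) : [τ_a, τ_b] → K × K be a good curve. Then the distance d_γ(t) = d(L(t), M(t)) does not increase: for all integers i, j with a ≤ i ≤ j ≤ b one has d_γ(τ_j) ≤ d_γ(τᵢ), and moreover d_γ(t) ≤ d_γ(τᵢ) for every t ∈ [τᵢ, τ_{i+1}] ⊂ [τ_a, τ_b]. -/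
open Filter Topology

variable {K : Type*} [MetricSpace K]

/-- For a good curve in a geodesic space with the betweenness property, the distance
between the players does not increase. -/
theorem stmt_5 {K : Type*} [MetricSpace K] (hK : GeodesicSpace K)
    (hbtw : BetweennessProperty K) (ε : ℝ) (hε : 0 < ε) (a b : ℕ) (hab : a < b)
    (L M : ℝ → K) (hgood : GoodCurve ε a b L M) :
    (∀ i j : ℕ, a ≤ i → i ≤ j → j ≤ b →
      dist (L ((j : ℝ) * ε)) (M ((j : ℝ) * ε)) ≤ dist (L ((i : ℝ) * ε)) (M ((i : ℝ) * ε))) ∧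
    (∀ i : ℕ, a ≤ i → i < b → ∀ t ∈ Set.Icc ((i : ℝ) * ε) (((i : ℝ) + 1) * ε),
      dist (L t) (M t) ≤ dist (L ((i : ℝ) * ε)) (M ((i : ℝ) * ε))) := by

  obtain ⟨hL, hM, hbet, hstep, _hge⟩ := hgood
  have hmem : ∀ x : ℝ, (a:ℝ)*ε ≤ x → x ≤ (b:ℝ)*ε → x ∈ Set.Icc ((a:ℝ)*ε) ((b:ℝ)*ε) :=
    fun x h1 h2 => ⟨h1, h2⟩
  have key : ∀ i : ℕ, a ≤ i → i < b →
      dist (L (((i:ℝ)+1)*ε)) (M ((i:ℝ)*ε)) = dist (L ((i:ℝ)*ε)) (M ((i:ℝ)*ε)) - ε := by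
    intro i h1 h2
    have hb := hbet i h1 h2
    have hs := hstep i h1 h2
    unfold LiesBetween at hb
    linarith
  -- part 2
  have part2 : ∀ i : ℕ, a ≤ i → i < b → ∀ t ∈ Set.Icc ((i : ℝ) * ε) (((i : ℝ) + 1) * ε),
      dist (L t) (M t) ≤ dist (L ((i : ℝ) * ε)) (M ((i : ℝ) * ε)) := by
    intro i h1 h2 t ht
    have hia : (a:ℝ)*ε ≤ (i:ℝ)*ε :=
      mul_le_mul_of_nonneg_right (by exact_mod_cast h1) hε.le
    have hib : ((i:ℝ)+1)*ε ≤ (b:ℝ)*ε := by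
      have : ((i:ℝ)+1) ≤ (b:ℝ) := by exact_mod_cast h2
      exact mul_le_mul_of_nonneg_right this hε.le
    have hti : (i:ℝ)*ε ∈ Set.Icc ((a:ℝ)*ε) ((b:ℝ)*ε) :=
      hmem _ hia (le_trans (by nlinarith) hib)
    have hti1 : ((i:ℝ)+1)*ε ∈ Set.Icc ((a:ℝ)*ε) ((b:ℝ)*ε) :=
      hmem _ (le_trans hia (by nlinarith)) hib
    have htm : t ∈ Set.Icc ((a:ℝ)*ε) ((b:ℝ)*ε) :=
      hmem _ (le_trans hia ht.1) (le_trans ht.2 hib)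
    have hL1 : dist (L t) (L (((i:ℝ)+1)*ε)) ≤ ((i:ℝ)+1)*ε - t := by
      have := hL.dist_le_mul t htm _ hti1
      simp only [NNReal.coe_one, one_mul, Real.dist_eq] at this
      calc dist (L t) (L (((i:ℝ)+1)*ε)) ≤ |t - ((i:ℝ)+1)*ε| := this
        _ = ((i:ℝ)+1)*ε - t := by rw [abs_of_nonpos (by linarith [ht.2])]; ring
    have hM1 : dist (M ((i:ℝ)*ε)) (M t) ≤ t - (i:ℝ)*ε := by
      have := hM.dist_le_mul _ hti t htm
      simp only [NNReal.coe_one, one_mul, Real.dist_eq] at this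
      calc dist (M ((i:ℝ)*ε)) (M t) ≤ |(i:ℝ)*ε - t| := this
        _ = t - (i:ℝ)*ε := by rw [abs_of_nonpos (by linarith [ht.1])]; ring
    have hk := key i h1 h2
    calc dist (L t) (M t)
        ≤ dist (L t) (L (((i:ℝ)+1)*ε)) + dist (L (((i:ℝ)+1)*ε)) (M ((i:ℝ)*ε))
            + dist (M ((i:ℝ)*ε)) (M t) := dist_triangle4 _ _ _ _
      _ ≤ dist (L ((i:ℝ)*ε)) (M ((i:ℝ)*ε)) := by linarith
  refine ⟨?_, part2⟩
  intro i j hai hij hjb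
  induction j, hij using Nat.le_induction with
  | base => exact le_refl _
  | succ n hn ih =>
    have hnb : n < b := lt_of_lt_of_le (Nat.lt_succ_self n) hjb
    have hstep2 : dist (L (((n:ℝ)+1)*ε)) (M (((n:ℝ)+1)*ε))
        ≤ dist (L ((n:ℝ)*ε)) (M ((n:ℝ)*ε)) := by
      apply part2 n (le_trans hai hn) hnb
      constructor
      · nlinarith
      · exact le_refl _
    have hcast : ((n+1 : ℕ) : ℝ) = (n:ℝ)+1 := by push_cast; ring
    rw [hcast]
    exact le_trans hstep2 (ih hnb.le)
end

section
/- Let (K,d) be a compact geodesic metric space, let ε > 0, and let ζ = (L, M) : [0, ∞) → K × K be an ε-simple-pursuit curve such that d(L(t), M(t)) > ε for all t ≥ 0. Let Z* ∈ K × K be a limit point of the sequence (ζ(nε))_{n∈ℕ} with respect to the max metric ρ((A₁,A₂),(B₁,B₂)) = max{d(A₁,B₁), d(A₂,B₂)}, and let A be the closed ε/3-ball around Z* in (K × K, ρ). Then the set {n ∈ ℕ : ζ(nε) ∈ A} is infinite and contains no two consecutive integers; consequently there are infinitely many rounds of ζ for A. -/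
open Filter Topology

variable {K : Type*} [MetricSpace K]

/-- An `ε`-simple-pursuit curve `(L, M) : [0, ∞) → K × K`. -/
def SimplePursuitCurve (ε : ℝ) (L M : ℝ → K) : Prop :=
  LipschitzOnWith 1 L (Set.Ici (0 : ℝ)) ∧
  LipschitzOnWith 1 M (Set.Ici (0 : ℝ)) ∧
  ∀ i : ℕ, ε ≤ dist (L ((i : ℝ) * ε)) (M ((i : ℝ) * ε)) →
    dist (L ((i : ℝ) * ε)) (L (((i : ℝ) + 1) * ε)) = ε ∧
    LiesBetween (L (((i : ℝ) + 1) * ε)) (L ((i : ℝ) * ε)) (M ((i : ℝ) * ε))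

/-- The restriction of `ζ = (L, M)` to `[iε, jε]` is a round for `A ⊆ K × K`. -/
def IsRound (ε : ℝ) (L M : ℝ → K) (A : Set (K × K)) (i j : ℕ) : Prop :=
  i + 1 < j ∧
  (L ((i : ℝ) * ε), M ((i : ℝ) * ε)) ∈ A ∧
  (L ((j : ℝ) * ε), M ((j : ℝ) * ε)) ∈ A ∧
  ∀ k : ℕ, i < k → k < j → (L ((k : ℝ) * ε), M ((k : ℝ) * ε)) ∉ A

/-- Around any limit point `Z*` of the sampled pursuit sequence, the closed `ε/3`-ball `A`
is visited at infinitely many sample times, never at two consecutive sample times, and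
consequently there are infinitely many rounds for `A`. -/
theorem stmt_8 {K : Type*} [MetricSpace K] [CompactSpace K] (hK : GeodesicSpace K)
    (ε : ℝ) (hε : 0 < ε) (L M : ℝ → K) (hζ : SimplePursuitCurve ε L M)
    (hfar : ∀ t : ℝ, 0 ≤ t → ε < dist (L t) (M t))
    (Z : K × K) (φ : ℕ → ℕ) (hφ : StrictMono φ)
    (hlim : Tendsto (fun n => (L ((φ n : ℝ) * ε), M ((φ n : ℝ) * ε))) atTop (nhds Z)) :
    {n : ℕ | (L ((n : ℝ) * ε), M ((n : ℝ) * ε)) ∈ Metric.closedBall Z (ε / 3)}.Infinite ∧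
    (∀ n : ℕ, (L ((n : ℝ) * ε), M ((n : ℝ) * ε)) ∈ Metric.closedBall Z (ε / 3) →
      (L (((n : ℝ) + 1) * ε), M (((n : ℝ) + 1) * ε)) ∉ Metric.closedBall Z (ε / 3)) ∧
    {p : ℕ × ℕ | IsRound ε L M (Metric.closedBall Z (ε / 3)) p.1 p.2}.Infinite := by
  classical
  obtain ⟨hL, hM, hstep⟩ := hζ
  set A := Metric.closedBall Z (ε / 3) with hA
  -- Part 2: no two consecutive visits
  have h2 : ∀ n : ℕ, (L ((n : ℝ) * ε), M ((n : ℝ) * ε)) ∈ A →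
      (L (((n : ℝ) + 1) * ε), M (((n : ℝ) + 1) * ε)) ∉ A := by
    intro n hn hmem
    have hfar' : ε ≤ dist (L ((n : ℝ) * ε)) (M ((n : ℝ) * ε)) :=
      le_of_lt (hfar _ (by positivity))
    obtain ⟨hd, -⟩ := hstep n hfar'
    have hn' : dist (L ((n : ℝ) * ε)) Z.1 ≤ ε / 3 := by
      have := Metric.mem_closedBall.mp hn
      rw [Prod.dist_eq] at this
      exact le_trans (le_max_left _ _) this
    have hm' : dist (L (((n : ℝ) + 1) * ε)) Z.1 ≤ ε / 3 := by
      have := Metric.mem_closedBall.mp hmem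
      rw [Prod.dist_eq] at this
      exact le_trans (le_max_left _ _) this
    have htri := dist_triangle (L ((n : ℝ) * ε)) Z.1 (L (((n : ℝ) + 1) * ε))
    rw [dist_comm Z.1] at htri
    linarith
  -- Part 1: infinitely many visits
  have h1 : {n : ℕ | (L ((n : ℝ) * ε), M ((n : ℝ) * ε)) ∈ A}.Infinite := by
    obtain ⟨N, hN⟩ := Metric.tendsto_atTop.mp hlim (ε / 3) (by positivity)
    apply Set.infinite_of_injective_forall_mem (f := fun n : ℕ => φ (n + N))
    · intro a b hab
      have := hφ.injective hab
      omega
    · intro n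
      have := hN (n + N) (by omega)
      exact Metric.mem_closedBall.mpr (le_of_lt this)
  refine ⟨h1, h2, ?_⟩
  -- Part 3: infinitely many rounds
  set S := {n : ℕ | (L ((n : ℝ) * ε), M ((n : ℝ) * ε)) ∈ A} with hS
  have key : ∀ n ∈ S, ∃ j, IsRound ε L M A n j := by
    intro n hn
    obtain ⟨m, hm, hnm⟩ := h1.exists_gt n
    have hP : ∃ j, n < j ∧ j ∈ S := ⟨m, hnm, hm⟩
    set j := Nat.find hP with hj
    obtain ⟨hj1, hj2⟩ := Nat.find_spec hP
    refine ⟨j, ?_, hn, hj2, ?_⟩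
    · rcases Nat.lt_or_ge (n + 1) j with h | h
      · exact h
      · exfalso
        have hje : j = n + 1 := by omega
        have : (L (((n + 1 : ℕ) : ℝ) * ε), M (((n + 1 : ℕ) : ℝ) * ε)) ∈ A := by
          rw [← hje]; exact hj2
        apply h2 n hn
        push_cast at this
        exact this
    · intro k hk1 hk2 hkS
      exact Nat.find_min hP hk2 ⟨hk1, hkS⟩
  have hsub : S ⊆ Prod.fst '' {p : ℕ × ℕ | IsRound ε L M A p.1 p.2} := by
    intro n hn
    obtain ⟨j, hjr⟩ := key n hn
    exact ⟨(n, j), hjr, rfl⟩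
  exact Set.Infinite.of_image _ (h1.mono hsub)
end

section
/- Let (K,d) be a compact geodesic metric space, let ε > 0, and let ζ = (L, M) : [0, ∞) → K × K be an ε-simple-pursuit curve such that d(L(t), M(t)) > ε for all t ≥ 0. Then there exist a nonempty set S ⊂ K × K with diameter less than ε (in the max metric ρ), an integer m ≥ 2, and a strictly increasing sequence of nonnegative integers (i_n)_{n∈ℕ} such that for every n the restriction of ζ to [i_n ε, i_n ε + mε] is a round for S; that is, infinitely many rounds for S all have the same length mε. -/
open Filter Topology

variable {K : Type*} [MetricSpace K]

/-- For a capture-free pursuit curve in a compact geodesic space, there are a nonempty set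
`S` of diameter `< ε`, an integer `m ≥ 2`, and infinitely many rounds for `S`, all of the
same length `mε`. -/
theorem stmt_9 {K : Type*} [MetricSpace K] [CompactSpace K] (hK : GeodesicSpace K)
    (ε : ℝ) (hε : 0 < ε) (L M : ℝ → K) (hζ : SimplePursuitCurve ε L M)
    (hfar : ∀ t : ℝ, 0 ≤ t → ε < dist (L t) (M t)) :
    ∃ S : Set (K × K), S.Nonempty ∧ Metric.diam S < ε ∧
      ∃ m : ℕ, 2 ≤ m ∧ ∃ i : ℕ → ℕ, StrictMono i ∧
        ∀ n : ℕ, IsRound ε L M S (i n) (i n + m) := by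
  classical
  set P : ℕ → K × K := fun k => (L ((k : ℝ) * ε), M ((k : ℝ) * ε)) with hP
  have hstep : ∀ k : ℕ, ε ≤ dist (P k) (P (k + 1)) := by
    intro k
    have h0 : (0:ℝ) ≤ (k:ℝ) * ε := by positivity
    have hfar' := hfar ((k:ℝ) * ε) h0
    have hd := (hζ.2.2 k hfar'.le).1
    have hcast : ((k:ℝ) + 1) * ε = (((k+1 : ℕ)) : ℝ) * ε := by push_cast; ring
    rw [hcast] at hd
    calc ε = dist (L ((k:ℝ)*ε)) (L ((((k+1:ℕ)):ℝ)*ε)) := hd.symm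
    _ ≤ dist (P k) (P (k+1)) := by
        rw [Prod.dist_eq]; exact le_max_left _ _
  obtain ⟨t, ht⟩ : ∃ t : Finset (K × K),
      (Set.univ : Set (K × K)) ⊆ ⋃ x ∈ t, Metric.ball x (ε/3) := by
    apply IsCompact.elim_finite_subcover isCompact_univ
      (fun x : K × K => Metric.ball x (ε/3)) (fun _ => Metric.isOpen_ball)
    intro p _
    exact Set.mem_iUnion.2 ⟨p, Metric.mem_ball_self (by positivity)⟩
  have hcov : ∀ p : K × K, ∃ c, c ∈ t ∧ dist p c < ε/3 := by
    intro p
    have h := ht (Set.mem_univ p)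
    simp only [Set.mem_iUnion, Metric.mem_ball] at h
    obtain ⟨c, hc, hpc⟩ := h
    exact ⟨c, hc, hpc⟩
  choose g hg1 hg2 using hcov
  set N := t.card with hN
  have hne : ∀ k : ℕ, g (P (k+1)) ≠ g (P k) := by
    intro k h
    have htri : dist (P k) (P (k+1)) ≤ dist (P k) (g (P k)) + dist (g (P (k+1))) (P (k+1)) := by
      rw [h]; exact dist_triangle _ _ _
    have h2 := hg2 (P k)
    have h3 := hg2 (P (k+1))
    rw [dist_comm] at h3
    have h4 := hstep k
    linarith
  have key : ∀ n : ℕ, ∃ k m : ℕ, n ≤ k ∧ 2 ≤ m ∧ m ≤ N ∧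
      g (P (k + m)) = g (P k) ∧ ∀ j, 0 < j → j < m → g (P (k + j)) ≠ g (P k) := by
    intro n
    have hcard : Fintype.card {x // x ∈ t} < Fintype.card (Fin (N+1)) := by
      simp [hN]
    obtain ⟨a, b, hab, heq⟩ := Fintype.exists_ne_map_eq_of_card_lt
      (fun j : Fin (N+1) => (⟨g (P (n + j)), hg1 _⟩ : {x // x ∈ t})) hcard
    have heq' : g (P (n + (a:ℕ))) = g (P (n + (b:ℕ))) := congrArg Subtype.val heq
    -- wlog a < b
    obtain ⟨a, b, hlt, heq2⟩ : ∃ a b : ℕ, a < b ∧ b ≤ N ∧ g (P (n + b)) = g (P (n + a)) := by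
      rcases lt_or_gt_of_ne (fun h => hab (Fin.ext h) : (a:ℕ) ≠ (b:ℕ)) with h | h
      · exact ⟨a, b, h, Nat.lt_succ_iff.1 b.isLt, heq'.symm⟩
      · exact ⟨b, a, h, Nat.lt_succ_iff.1 a.isLt, heq'⟩
    obtain ⟨hbN, heq2⟩ := heq2
    set k := n + a with hk
    have hQ : ∃ m' : ℕ, 0 < m' ∧ g (P (k + m')) = g (P k) := by
      refine ⟨b - a, by omega, ?_⟩
      have : k + (b - a) = n + b := by omega
      rw [this]; exact heq2
    set m := Nat.find hQ with hm
    have hspec := Nat.find_spec hQ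
    have hmle : m ≤ b - a := Nat.find_min' hQ ⟨by omega, by
      have : k + (b - a) = n + b := by omega
      rw [this]; exact heq2⟩
    have hm1 : m ≠ 1 := by
      intro h1
      exact hne k (h1 ▸ hspec.2)
    refine ⟨k, m, Nat.le_add_right _ _, by omega, by omega, hspec.2, ?_⟩
    intro j hj0 hjm
    intro hgj
    exact Nat.find_min hQ hjm ⟨hj0, hgj⟩
  choose kk mm hkk h2m hmN hret hmid using key
  -- pigeonhole over windows
  set F : ℕ → {x // x ∈ t} × Fin (N+1) :=
    fun n : ℕ => ((⟨g (P (kk n)), hg1 _⟩ : {x // x ∈ t}),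
      (⟨mm n, Nat.lt_succ_of_le (hmN n)⟩ : Fin (N+1))) with hF
  obtain ⟨⟨c₀, m₀⟩, hfib⟩ := Finite.exists_infinite_fiber F
  set A : Set ℕ := F ⁻¹' {(c₀, m₀)} with hA
  have hAinf : A.Infinite := Set.infinite_coe_iff.1 hfib
  have hAc : ∀ a ∈ A, g (P (kk a)) = (c₀ : K × K) ∧ mm a = (m₀ : ℕ) := by
    intro a ha
    have h := ha
    simp only [hA, hF, Set.mem_preimage, Set.mem_singleton_iff, Prod.mk.injEq] at h
    exact ⟨congrArg Subtype.val h.1, congrArg Fin.val h.2⟩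
  set B : Set ℕ := kk '' A with hB
  have hBinf : B.Infinite := by
    intro hBfin
    obtain ⟨b, hb⟩ := hBfin.bddAbove
    refine hAinf (Set.Finite.subset (Set.finite_Iic b) ?_)
    intro a ha
    have : kk a ∈ B := ⟨a, ha, rfl⟩
    have := hb this
    exact le_trans (hkk a) this
  -- the answer
  refine ⟨{p : K × K | g p = (c₀ : K × K)}, ?_, ?_, (m₀ : ℕ), ?_, Nat.nth (· ∈ B), ?_, ?_⟩
  · obtain ⟨a, ha⟩ := hAinf.nonempty
    exact ⟨P (kk a), (hAc a ha).1⟩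
  · refine lt_of_le_of_lt (Metric.diam_le_of_forall_dist_le (by positivity : (0:ℝ) ≤ 2*ε/3) ?_) (by linarith)
    intro p hp q hq
    simp only [Set.mem_setOf_eq] at hp hq
    have h1 := hg2 p
    have h2 := hg2 q
    rw [hp] at h1
    rw [hq] at h2
    calc dist p q ≤ dist p (c₀ : K × K) + dist (c₀ : K × K) q := dist_triangle _ _ _
    _ ≤ _ := by rw [dist_comm (c₀ : K × K) q]; linarith
  · obtain ⟨a, ha⟩ := hAinf.nonempty
    have := (hAc a ha).2
    have := h2m a
    omega
  · exact Nat.nth_strictMono hBinf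
  · intro n
    have hmemB : Nat.nth (· ∈ B) n ∈ B := Nat.nth_mem_of_infinite hBinf n
    obtain ⟨a, ha, hka⟩ := hmemB
    obtain ⟨hgc, hma⟩ := hAc a ha
    set i0 := Nat.nth (· ∈ B) n with hi0
    have h2 : 2 ≤ (m₀ : ℕ) := by have := h2m a; omega
    refine ⟨by omega, ?_, ?_, ?_⟩
    · show P i0 ∈ _
      rw [← hka]
      exact hgc
    · show P (i0 + (m₀:ℕ)) ∈ _
      rw [← hka, ← hma]
      simp only [Set.mem_setOf_eq]
      rw [hret a]
      exact hgc
    · intro j hj1 hj2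
      show P j ∉ _
      simp only [Set.mem_setOf_eq]
      have hdecomp : j = kk a + (j - i0) := by omega
      rw [hdecomp]
      intro hcon
      refine hmid a (j - i0) (by omega) (by omega) ?_
      rw [hgc]
      exact hcon
end

section
/- Let (K,d) be a compact geodesic metric space satisfying the betweenness property, let ε > 0, and let ζ = (L, M) : [0, ∞) → K × K be an ε-simple-pursuit curve with d(L(t), M(t)) > ε for all t ≥ 0. Let S ⊂ K × K be a set of diameter less than ε (in the max metric ρ), let m ≥ 2 be an integer, and let (i_n) be a strictly increasing sequence of nonnegative integers such that each restriction ζ|[i_n ε, i_n ε + mε] is a round for S. Define ζⁿ : [0, mε] → K × K by ζⁿ(t) = ζ(i_n ε + t). Then some subsequence of (ζⁿ) converges uniformly to a curve ζ* = (ζ*_L, ζ*_M) : [0, mε] → K × K such that: (1) ζ* is a good curve; (2) d(ζ*_L(0), ζ*_L(mε)) < ε; (3) d(ζ*_L(0), ζ*_M(0)) = d(ζ*_L(mε), ζ*_M(mε)). -/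
open Filter Topology

variable {K : Type*} [MetricSpace K]

/-- Sequential Arzelà–Ascoli for `1`-Lipschitz maps on `[0, T]` into a compact metric space. -/
lemma exists_subseq_tendstoUniformlyOn_of_lipschitz {Y : Type*} [MetricSpace Y] [CompactSpace Y]
    {T : ℝ} (hT : 0 ≤ T) (f : ℕ → ℝ → Y)
    (hf : ∀ n, LipschitzWith 1 (fun x : Set.Icc (0:ℝ) T => f n (x : ℝ))) :
    ∃ φ : ℕ → ℕ, StrictMono φ ∧ ∃ g : ℝ → Y,
      TendstoUniformlyOn (fun k => f (φ k)) g atTop (Set.Icc 0 T) := by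
  haveI : CompactSpace (Set.Icc (0:ℝ) T) := isCompact_iff_compactSpace.mp isCompact_Icc
  set Fset : Set C(Set.Icc (0:ℝ) T, Y) := {h | LipschitzWith 1 h} with hFset
  have himg : ContinuousMap.toFun '' Fset = {h : Set.Icc (0:ℝ) T → Y | LipschitzWith 1 h} := by
    ext h
    constructor
    · rintro ⟨h', hh', rfl⟩; exact hh'
    · intro hh; exact ⟨⟨h, hh.continuous⟩, hh, rfl⟩
  have hS1 : IsCompact (ContinuousMap.toFun '' Fset) := by
    rw [himg]; exact (isClosed_setOf_lipschitzWith 1).isCompact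
  have hS2 : Equicontinuous ((↑) : Fset → Set.Icc (0:ℝ) T → Y) := by
    refine Metric.equicontinuous_of_continuity_modulus (fun r => r) tendsto_id _ ?_
    intro x y j
    simpa using j.2.dist_le_mul x y
  have hcomp : IsCompact Fset := ArzelaAscoli.isCompact_of_equicontinuous Fset hS1 hS2
  have hmem : ∀ n, (⟨fun x => f n (x : ℝ), (hf n).continuous⟩ : C(Set.Icc (0:ℝ) T, Y)) ∈ Fset :=
    fun n => hf n
  obtain ⟨g0, hg0, φ, hφ, hconv⟩ := hcomp.isSeqCompact hmem
  have huc : TendstoUniformly (fun k (x : Set.Icc (0:ℝ) T) => f (φ k) (x : ℝ)) ⇑g0 atTop :=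
    ContinuousMap.tendsto_iff_tendstoUniformly.mp hconv
  refine ⟨φ, hφ, fun t =>
    if h : t ∈ Set.Icc (0:ℝ) T then g0 ⟨t, h⟩ else g0 ⟨0, Set.left_mem_Icc.mpr hT⟩, ?_⟩
  rw [tendstoUniformlyOn_iff_tendstoUniformly_comp_coe]
  have heq : ((fun t => if h : t ∈ Set.Icc (0:ℝ) T then g0 ⟨t, h⟩
      else g0 ⟨0, Set.left_mem_Icc.mpr hT⟩) ∘ ((↑) : Set.Icc (0:ℝ) T → ℝ)) = ⇑g0 := by
    funext x
    simp only [Function.comp_apply]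
    rw [dif_pos x.2]
  rw [heq]
  exact huc

/-- The limit curve of a sequence of same-length rounds: some subsequence of the shifted
curves converges uniformly to a good curve `ζ* = (ζ*_L, ζ*_M)` with
`d(ζ*_L(0), ζ*_L(mε)) < ε` and `d(ζ*_L(0), ζ*_M(0)) = d(ζ*_L(mε), ζ*_M(mε))`. -/
theorem stmt_10 {K : Type*} [MetricSpace K] [CompactSpace K] (hK : GeodesicSpace K)
    (hbtw : BetweennessProperty K) (ε : ℝ) (hε : 0 < ε)
    (L M : ℝ → K) (hζ : SimplePursuitCurve ε L M)
    (hfar : ∀ t : ℝ, 0 ≤ t → ε < dist (L t) (M t))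
    (S : Set (K × K)) (hS : Metric.diam S < ε) (m : ℕ) (hm : 2 ≤ m)
    (i : ℕ → ℕ) (hi : StrictMono i)
    (hrounds : ∀ n : ℕ, IsRound ε L M S (i n) (i n + m)) :
    ∃ φ : ℕ → ℕ, StrictMono φ ∧ ∃ gL gM : ℝ → K,
      TendstoUniformlyOn
        (fun k t => (L ((i (φ k) : ℝ) * ε + t), M ((i (φ k) : ℝ) * ε + t)))
        (fun t => (gL t, gM t)) atTop (Set.Icc 0 ((m : ℝ) * ε)) ∧
      GoodCurve ε 0 m gL gM ∧
      dist (gL 0) (gL ((m : ℝ) * ε)) < ε ∧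
      dist (gL 0) (gM 0) = dist (gL ((m : ℝ) * ε)) (gM ((m : ℝ) * ε)) := by
  obtain ⟨hL, hM, hpur⟩ := hζ
  have hLd : ∀ s ∈ Set.Ici (0:ℝ), ∀ t ∈ Set.Ici (0:ℝ), dist (L s) (L t) ≤ dist s t := by
    intro s hs t ht
    simpa using lipschitzOnWith_iff_dist_le_mul.mp hL s hs t ht
  have hMd : ∀ s ∈ Set.Ici (0:ℝ), ∀ t ∈ Set.Ici (0:ℝ), dist (M s) (M t) ≤ dist s t := by
    intro s hs t ht
    simpa using lipschitzOnWith_iff_dist_le_mul.mp hM s hs t ht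
  have hgrid0 : ∀ j : ℕ, (0:ℝ) ≤ (j:ℝ) * ε := fun j => mul_nonneg (Nat.cast_nonneg j) hε.le
  have hfire : ∀ j : ℕ, dist (L ((j:ℝ)*ε)) (L (((j:ℝ)+1)*ε)) = ε ∧
      LiesBetween (L (((j:ℝ)+1)*ε)) (L ((j:ℝ)*ε)) (M ((j:ℝ)*ε)) :=
    fun j => hpur j (le_of_lt (hfar _ (hgrid0 j)))
  set T : ℝ := (m:ℝ) * ε with hTdef
  have hT0 : (0:ℝ) ≤ T := hgrid0 m
  set c : ℕ → ℝ := fun n => (i n : ℝ) * ε with hcdef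
  have hc0 : ∀ n, (0:ℝ) ≤ c n := fun n => hgrid0 (i n)
  -- the grid distance sequence is antitone
  set a : ℕ → ℝ := fun j => dist (L ((j:ℝ)*ε)) (M ((j:ℝ)*ε)) with hadef
  have hsucc : ∀ j : ℕ, ((j+1:ℕ):ℝ) * ε = ((j:ℝ)+1)*ε := by intro j; push_cast; ring
  have hanti : Antitone a := by
    refine antitone_nat_of_succ_le ?_
    intro j
    obtain ⟨hd, hb⟩ := hfire j
    have hM1 : dist (M ((j:ℝ)*ε)) (M (((j:ℝ)+1)*ε)) ≤ ε := by
      refine le_trans (hMd _ (hgrid0 j) _ ?_) ?_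
      · have := hgrid0 (j+1); rw [hsucc] at this; exact this
      · rw [Real.dist_eq]
        have : (j:ℝ)*ε - ((j:ℝ)+1)*ε = -ε := by ring
        rw [this, abs_neg, abs_of_nonneg hε.le]
    have hkey : dist (L (((j:ℝ)+1)*ε)) (M ((j:ℝ)*ε)) = a j - ε := by
      have hb' := hb
      unfold LiesBetween at hb'
      simp only [hadef]
      linarith
    have htri := dist_triangle (L (((j:ℝ)+1)*ε)) (M ((j:ℝ)*ε)) (M (((j:ℝ)+1)*ε))
    have : a (j+1) = dist (L (((j:ℝ)+1)*ε)) (M (((j:ℝ)+1)*ε)) := by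
      simp only [hadef, hsucc j]
    rw [this]
    linarith
  have hbdd : BddBelow (Set.range a) := ⟨0, by rintro _ ⟨j, rfl⟩; exact dist_nonneg⟩
  have hδ : Tendsto a atTop (𝓝 (⨅ j, a j)) := tendsto_atTop_ciInf hanti hbdd
  -- Arzelà–Ascoli
  have hlip : ∀ n, LipschitzWith 1
      (fun x : Set.Icc (0:ℝ) T => ((L (c n + (x:ℝ)), M (c n + (x:ℝ))) : K × K)) := by
    intro n
    rw [lipschitzWith_iff_dist_le_mul]
    intro x y
    have hx : (0:ℝ) ≤ c n + (x:ℝ) := add_nonneg (hc0 n) x.2.1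
    have hy : (0:ℝ) ≤ c n + (y:ℝ) := add_nonneg (hc0 n) y.2.1
    have hd : dist (c n + (x:ℝ)) (c n + (y:ℝ)) = dist x y := by
      rw [dist_add_left, Subtype.dist_eq]
    rw [Prod.dist_eq]
    simp only [NNReal.coe_one, one_mul]
    exact max_le (by rw [← hd]; exact hLd _ hx _ hy) (by rw [← hd]; exact hMd _ hx _ hy)
  obtain ⟨φ, hφ, g, hg⟩ := exists_subseq_tendstoUniformlyOn_of_lipschitz hT0
    (fun n t => ((L (c n + t), M (c n + t)) : K × K)) hlip
  refine ⟨φ, hφ, fun t => (g t).1, fun t => (g t).2, ?_, ?_, ?_, ?_⟩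
  · have : (fun t => (((g t).1, (g t).2) : K × K)) = g := by funext t; exact rfl
    rw [this]
    exact hg
  all_goals {
    have hpt : ∀ t ∈ Set.Icc (0:ℝ) T,
        Tendsto (fun k => ((L (c (φ k) + t), M (c (φ k) + t)) : K × K)) atTop (𝓝 (g t)) :=
      fun t ht => hg.tendsto_at ht
    have hptL : ∀ t ∈ Set.Icc (0:ℝ) T,
        Tendsto (fun k => L (c (φ k) + t)) atTop (𝓝 (g t).1) :=
      fun t ht => (continuous_fst.tendsto _).comp (hpt t ht)
    have hptM : ∀ t ∈ Set.Icc (0:ℝ) T,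
        Tendsto (fun k => M (c (φ k) + t)) atTop (𝓝 (g t).2) :=
      fun t ht => (continuous_snd.tendsto _).comp (hpt t ht)
    have hmemg : ∀ j : ℕ, j ≤ m → (j:ℝ)*ε ∈ Set.Icc (0:ℝ) T := by
      intro j hj
      exact ⟨hgrid0 j, mul_le_mul_of_nonneg_right (Nat.cast_le.mpr hj) hε.le⟩
    have hshift : ∀ n j : ℕ, c n + (j:ℝ)*ε = ((i n + j : ℕ):ℝ)*ε := by
      intro n j; simp only [hcdef]; push_cast; ring
    have hshift' : ∀ n j : ℕ, c n + ((j:ℝ)+1)*ε = (((i n + j : ℕ):ℝ)+1)*ε := by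
      intro n j; simp only [hcdef]; push_cast; ring
    first
    | -- GoodCurve
      ( refine ⟨?_, ?_, ?_, ?_, ?_⟩
        · simp only [Nat.cast_zero, zero_mul]
          rw [lipschitzOnWith_iff_dist_le_mul]
          intro x hx y hy
          simp only [NNReal.coe_one, one_mul]
          refine le_of_tendsto ((hptL x hx).dist (hptL y hy)) (Eventually.of_forall fun k => ?_)
          have := hLd _ (add_nonneg (hc0 (φ k)) hx.1) _ (add_nonneg (hc0 (φ k)) hy.1)
          rwa [dist_add_left] at this
        · simp only [Nat.cast_zero, zero_mul]
          rw [lipschitzOnWith_iff_dist_le_mul]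
          intro x hx y hy
          simp only [NNReal.coe_one, one_mul]
          refine le_of_tendsto ((hptM x hx).dist (hptM y hy)) (Eventually.of_forall fun k => ?_)
          have := hMd _ (add_nonneg (hc0 (φ k)) hx.1) _ (add_nonneg (hc0 (φ k)) hy.1)
          rwa [dist_add_left] at this
        · intro j _ hj
          have t1 : (j:ℝ)*ε ∈ Set.Icc (0:ℝ) T := hmemg j hj.le
          have t2 : ((j:ℝ)+1)*ε ∈ Set.Icc (0:ℝ) T := by
            rw [← hsucc]; exact hmemg (j+1) hj
          have hA := hptL _ t1
          have hB := hptL _ t2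
          have hC := hptM _ t1
          have h1 := (hA.dist hB).add (hB.dist hC)
          have h2 := hA.dist hC
          refine tendsto_nhds_unique (Tendsto.congr (fun k => ?_) h1) h2
          have hb := (hfire (i (φ k) + j)).2
          unfold LiesBetween at hb
          rw [← hshift (φ k) j, ← hshift' (φ k) j] at hb
          exact hb
        · intro j _ hj
          have t1 : (j:ℝ)*ε ∈ Set.Icc (0:ℝ) T := hmemg j hj.le
          have t2 : ((j:ℝ)+1)*ε ∈ Set.Icc (0:ℝ) T := by
            rw [← hsucc]; exact hmemg (j+1) hj
          have hA := hptL _ t1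
          have hB := hptL _ t2
          refine tendsto_nhds_unique (hA.dist hB) (Tendsto.congr (fun k => ?_) tendsto_const_nhds)
          have hd := (hfire (i (φ k) + j)).1
          rw [← hshift (φ k) j, ← hshift' (φ k) j] at hd
          exact hd.symm
        · intro j _ hj
          have t1 : (j:ℝ)*ε ∈ Set.Icc (0:ℝ) T := hmemg j hj
          refine ge_of_tendsto ((hptL _ t1).dist (hptM _ t1)) (Eventually.of_forall fun k => ?_)
          exact (hfar _ (add_nonneg (hc0 (φ k)) (hgrid0 j))).le )
    | -- dist (gL 0) (gL T) < ε
      ( have t0 : (0:ℝ) ∈ Set.Icc (0:ℝ) T := Set.left_mem_Icc.mpr hT0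
        have tT : T ∈ Set.Icc (0:ℝ) T := Set.right_mem_Icc.mpr hT0
        refine lt_of_le_of_lt (le_of_tendsto ((hptL 0 t0).dist (hptL T tT))
          (Eventually.of_forall fun k => ?_)) hS
        have h1 := (hrounds (φ k)).2.1
        have h2 := (hrounds (φ k)).2.2.1
        have hb : dist ((L ((i (φ k):ℝ)*ε), M ((i (φ k):ℝ)*ε)) : K × K)
            ((L (((i (φ k) + m:ℕ):ℝ)*ε), M (((i (φ k) + m:ℕ):ℝ)*ε)) : K × K) ≤ Metric.diam S :=
          Metric.dist_le_diam_of_mem (Metric.isBounded_of_compactSpace) h1 h2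
        rw [Prod.dist_eq] at hb
        have hfst := le_trans (le_max_left _ _) hb
        have e0 : c (φ k) + 0 = (i (φ k):ℝ)*ε := by rw [add_zero]
        have eT : c (φ k) + T = ((i (φ k) + m:ℕ):ℝ)*ε := hshift (φ k) m
        rw [e0, eT]
        exact hfst )
    | -- equality of endpoint distances
      ( have t0 : (0:ℝ) ∈ Set.Icc (0:ℝ) T := Set.left_mem_Icc.mpr hT0
        have tT : T ∈ Set.Icc (0:ℝ) T := Set.right_mem_Icc.mpr hT0
        have s1 : Tendsto (fun k => a (i (φ k))) atTop (𝓝 (⨅ j, a j)) :=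
          hδ.comp ((hi.comp hφ).tendsto_atTop)
        have smono : StrictMono (fun k => i (φ k) + m) :=
          fun x y h => Nat.add_lt_add_right (hi (hφ h)) m
        have s2 : Tendsto (fun k => a (i (φ k) + m)) atTop (𝓝 (⨅ j, a j)) :=
          hδ.comp smono.tendsto_atTop
        have d0 := (hptL 0 t0).dist (hptM 0 t0)
        have dT := (hptL T tT).dist (hptM T tT)
        have e1 : dist (g 0).1 (g 0).2 = ⨅ j, a j := by
          refine tendsto_nhds_unique d0 (Tendsto.congr (fun k => ?_) s1)
          simp only [hadef, add_zero]
          rfl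
        have e2 : dist (g T).1 (g T).2 = ⨅ j, a j := by
          refine tendsto_nhds_unique dT (Tendsto.congr (fun k => ?_) s2)
          simp only [hadef]
          rw [← hshift (φ k) m]
        rw [e1, e2] )
  }
end

section
/- Let (K,d) be a compact geodesic metric space satisfying the betweenness property and let ε > 0. Then for every ε-simple-pursuit curve ζ = (L, M) : [0, ∞) → K × K there exists a time T > 0 such that d(L(T), M(T)) < ε. -/
open Filter Topology

variable {K : Type*} [MetricSpace K]

private lemma ne_of_le_dist {x y : K} {r : ℝ} (h1 : 0 < r) (h2 : r ≤ dist x y) : x ≠ y :=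
  dist_pos.mp (h1.trans_le h2)

/-- Chain lemma: a sequence of points with unit steps which is locally aligned is
globally aligned (uses the betweenness property). -/
private lemma chainA (hbtw : BetweennessProperty K) {ε : ℝ} (hε : 0 < ε) (a : ℕ → K)
    (h2 : ∀ j, dist (a j) (a (j+1)) = ε)
    (hloc : ∀ j, LiesBetween (a (j+1)) (a j) (a (j+2))) :
    ∀ j, dist (a 0) (a j) = j * ε := by
  have h22 : ∀ j, dist (a j) (a (j+2)) = 2 * ε := by
    intro j
    have h := hloc j
    unfold LiesBetween at h
    rw [h2 j, h2 (j+1)] at h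
    linarith
  have Q : ∀ j, dist (a 0) (a j) = j * ε ∧ LiesBetween (a j) (a 0) (a (j+1)) := by
    intro j
    induction j with
    | zero =>
      constructor
      · simp
      · unfold LiesBetween; simp
    | succ n ih =>
      obtain ⟨hd, hb⟩ := ih
      have hdsucc : dist (a 0) (a (n+1)) = (n+1 : ℕ) * ε := by
        unfold LiesBetween at hb
        rw [hd, h2 n] at hb
        push_cast
        linarith
      refine ⟨hdsucc, ?_⟩
      rcases n with _ | m
      · exact hloc 0
      · set n := m + 1 with hn
        have hn1 : (1 : ℝ) ≤ (n : ℝ) := by exact_mod_cast Nat.one_le_iff_ne_zero.mpr (by omega)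
        have ne1 : a 0 ≠ a n := ne_of_le_dist hε (by rw [hd]; nlinarith)
        have ne2 : a 0 ≠ a (n+1) := ne_of_le_dist hε (by rw [hdsucc]; push_cast; nlinarith)
        have ne3 : a 0 ≠ a (n+2) := by
          refine ne_of_le_dist hε ?_
          have htri := dist_triangle (a 0) (a (n+2)) (a (n+1))
          rw [dist_comm (a (n+2)) (a (n+1)), hdsucc, h2 (n+1)] at htri
          push_cast at htri ⊢
          nlinarith
        have ne4 : a n ≠ a (n+1) := ne_of_le_dist hε (le_of_eq (h2 n).symm)
        have ne5 : a n ≠ a (n+2) := ne_of_le_dist hε (by rw [h22 n]; linarith)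
        have ne6 : a (n+1) ≠ a (n+2) := ne_of_le_dist hε (le_of_eq (h2 (n+1)).symm)
        exact (hbtw (a 0) (a n) (a (n+1)) (a (n+2)) ne1 ne2 ne3 ne4 ne5 ne6 hb (hloc n)).2
  exact fun j => (Q j).1

/-- Chain lemma for the non-degenerate case: the evader's limit positions move away
from the pursuer's initial limit position at linear speed. -/
private lemma chainB (hbtw : BetweennessProperty K) {ε dstar : ℝ} (hε : 0 < ε)
    (hlt : ε < dstar) (a c : ℕ → K)
    (h1 : ∀ j, dist (a j) (c j) = dstar)
    (h2 : ∀ j, dist (a j) (a (j+1)) = ε)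
    (h3 : ∀ j, dist (a (j+1)) (c j) = dstar - ε)
    (h5 : ∀ j, dist (c j) (c (j+1)) = ε)
    (h6 : ∀ j, LiesBetween (c j) (a (j+1)) (c (j+1))) :
    ∀ j, dist (a 0) (c j) = dstar + j * ε := by
  have tele : ∀ j : ℕ, dist (a 0) (a j) ≤ j * ε := by
    intro j
    induction j with
    | zero => simp
    | succ n ih =>
      have htri := dist_triangle (a 0) (a n) (a (n+1))
      rw [h2 n] at htri
      push_cast
      push_cast at ih
      linarith
  intro j
  induction j with
  | zero => simpa using h1 0
  | succ n ih =>
    have hnn : (0:ℝ) ≤ (n:ℝ) := Nat.cast_nonneg n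
    have hA : dist (a 0) (a (n+1)) = ((n:ℝ)+1) * ε := by
      have hub := tele (n+1)
      have hlb := dist_triangle (a 0) (a (n+1)) (c n)
      rw [ih, h3] at hlb
      push_cast at hub
      linarith
    have hB : LiesBetween (a (n+1)) (a 0) (c n) := by
      unfold LiesBetween
      rw [hA, h3 n, ih]
      ring
    have hAD : dstar - ε ≤ dist (a 0) (c (n+1)) := by
      have htri := dist_triangle (a 0) (c n) (c (n+1))
      rw [ih, h5 n] at htri
      have htri2 := dist_triangle (a 0) (c (n+1)) (c n)
      rw [dist_comm (c (n+1)) (c n), h5 n, ih] at htri2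
      nlinarith
    have ne1 : a 0 ≠ a (n+1) := ne_of_le_dist hε (by rw [hA]; nlinarith)
    have ne2 : a 0 ≠ c n := ne_of_le_dist hε (by rw [ih]; nlinarith)
    have ne3 : a 0 ≠ c (n+1) := ne_of_le_dist (by linarith : (0:ℝ) < dstar - ε) hAD
    have ne4 : a (n+1) ≠ c n := ne_of_le_dist (by linarith : (0:ℝ) < dstar - ε) (le_of_eq (h3 n).symm)
    have ne5 : a (n+1) ≠ c (n+1) := ne_of_le_dist hε (by rw [h1 (n+1)]; linarith)
    have ne6 : c n ≠ c (n+1) := ne_of_le_dist hε (le_of_eq (h5 n).symm)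
    have hout := (hbtw (a 0) (a (n+1)) (c n) (c (n+1)) ne1 ne2 ne3 ne4 ne5 ne6 hB (h6 n)).2
    unfold LiesBetween at hout
    rw [ih, h5 n] at hout
    push_cast
    linarith

/-- In a compact geodesic space with the betweenness property, every `ε`-simple-pursuit
curve achieves `ε`-capture at some positive time. -/
theorem stmt_11 {K : Type*} [MetricSpace K] [CompactSpace K] (hK : GeodesicSpace K)
    (hbtw : BetweennessProperty K) (ε : ℝ) (hε : 0 < ε)
    (L M : ℝ → K) (hζ : SimplePursuitCurve ε L M) :
    ∃ T : ℝ, 0 < T ∧ dist (L T) (M T) < ε := by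
  obtain ⟨hL, hM, hstep⟩ := hζ
  by_contra hcon
  push_neg at hcon
  -- Lipschitz estimates
  have hLd : ∀ s t : ℝ, 0 ≤ s → 0 ≤ t → dist (L s) (L t) ≤ |s - t| := by
    intro s t hs ht
    have := hL.dist_le_mul s (Set.mem_Ici.mpr hs) t (Set.mem_Ici.mpr ht)
    simpa [Real.dist_eq] using this
  have hMd : ∀ s t : ℝ, 0 ≤ s → 0 ≤ t → dist (M s) (M t) ≤ |s - t| := by
    intro s t hs ht
    have := hM.dist_le_mul s (Set.mem_Ici.mpr hs) t (Set.mem_Ici.mpr ht)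
    simpa [Real.dist_eq] using this
  -- no capture at any nonnegative time
  have hcap : ∀ t : ℝ, 0 ≤ t → ε ≤ dist (L t) (M t) := by
    intro t ht
    by_contra hlt
    push_neg at hlt
    set δ := (ε - dist (L t) (M t)) / 3 with hδdef
    have hδ : 0 < δ := by rw [hδdef]; linarith
    have h1 := hcon (t + δ) (by linarith)
    have h2 := hLd (t + δ) t (by linarith) ht
    have h3 := hMd t (t + δ) ht (by linarith)
    have e2 : |t + δ - t| = δ := by
      rw [show t + δ - t = δ by ring, abs_of_pos hδ]
    have e3 : |t - (t + δ)| = δ := by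
      rw [show t - (t + δ) = -δ by ring, abs_neg, abs_of_pos hδ]
    rw [e2] at h2
    rw [e3] at h3
    have htri := dist_triangle4 (L (t + δ)) (L t) (M t) (M (t + δ))
    linarith

  -- grid times
  set T : ℕ → ℝ := fun n => (n : ℝ) * ε with hTdef
  have hTnn : ∀ n, 0 ≤ T n := fun n => mul_nonneg (Nat.cast_nonneg n) hε.le
  have hTsucc : ∀ n, T (n+1) = T n + ε := by
    intro n; simp only [hTdef]; push_cast; ring
  have hdge : ∀ n, ε ≤ dist (L (T n)) (M (T n)) := fun n => hcap _ (hTnn n)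
  have hstep' : ∀ n : ℕ, dist (L (T n)) (L (T (n+1))) = ε ∧
      LiesBetween (L (T (n+1))) (L (T n)) (M (T n)) := by
    intro n
    have hc : T (n+1) = ((n:ℝ) + 1) * ε := by simp only [hTdef]; push_cast; ring
    have := hstep n (hdge n)
    rw [← hc] at this
    exact this
  set d : ℕ → ℝ := fun n => dist (L (T n)) (M (T n)) with hddef
  have hEn : ∀ n, dist (L (T (n+1))) (M (T n)) = d n - ε := by
    intro n
    have h := (hstep' n).2
    unfold LiesBetween at h
    rw [(hstep' n).1] at h
    simp only [hddef]
    linarith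
  have hmstep : ∀ n, dist (M (T n)) (M (T (n+1))) ≤ ε := by
    intro n
    have h := hMd (T n) (T (n+1)) (hTnn n) (hTnn (n+1))
    have habs : |T n - T (n+1)| = ε := by
      rw [hTsucc n, show T n - (T n + ε) = -ε by ring, abs_neg, abs_of_pos hε]
    rw [habs] at h
    exact h
  have hanti : Antitone d := by
    apply antitone_nat_of_succ_le
    intro n
    have htri := dist_triangle (L (T (n+1))) (M (T n)) (M (T (n+1)))
    rw [hEn n] at htri
    have := hmstep n
    simp only [hddef]
    simp only [hddef] at htri
    linarith
  have hbdd : BddBelow (Set.range d) := ⟨ε, by rintro x ⟨n, rfl⟩; exact hdge n⟩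
  set dstar := ⨅ n, d n with hdstardef
  have htend : Tendsto d atTop (𝓝 dstar) := tendsto_atTop_ciInf hanti hbdd
  have hdstar : ε ≤ dstar := le_ciInf hdge
  -- midpoint facts
  have hmidnn : ∀ n, 0 ≤ T n + ε/2 := fun n => by linarith [hTnn n]
  have hmidL : ∀ n, dist (L (T n)) (L (T n + ε/2)) = ε/2 ∧
      dist (L (T n + ε/2)) (L (T (n+1))) = ε/2 := by
    intro n
    have ha := hLd (T n) (T n + ε/2) (hTnn n) (hmidnn n)
    have hb := hLd (T n + ε/2) (T (n+1)) (hmidnn n) (hTnn (n+1))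
    rw [show T n - (T n + ε/2) = -(ε/2) by ring, abs_neg, abs_of_pos (by linarith)] at ha
    have habs : |T n + ε/2 - T (n+1)| = ε/2 := by
      rw [hTsucc n, show T n + ε/2 - (T n + ε) = -(ε/2) by ring, abs_neg,
        abs_of_pos (by linarith)]
    rw [habs] at hb
    have htri := dist_triangle (L (T n)) (L (T n + ε/2)) (L (T (n+1)))
    rw [(hstep' n).1] at htri
    constructor <;> linarith
  have hmidM : ∀ n, dist (M (T n)) (M (T n + ε/2)) ≤ ε/2 ∧
      dist (M (T n + ε/2)) (M (T (n+1))) ≤ ε/2 := by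
    intro n
    have ha := hMd (T n) (T n + ε/2) (hTnn n) (hmidnn n)
    have hb := hMd (T n + ε/2) (T (n+1)) (hmidnn n) (hTnn (n+1))
    rw [show T n - (T n + ε/2) = -(ε/2) by ring, abs_neg, abs_of_pos (by linarith)] at ha
    have habs : |T n + ε/2 - T (n+1)| = ε/2 := by
      rw [hTsucc n, show T n + ε/2 - (T n + ε) = -(ε/2) by ring, abs_neg,
        abs_of_pos (by linarith)]
    rw [habs] at hb
    exact ⟨ha, hb⟩
  have hmidcap : ∀ n, ε ≤ dist (L (T n + ε/2)) (M (T n + ε/2)) := fun n => hcap _ (hmidnn n)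
  -- compactness: subsequential limit of shifted configurations
  set u : ℕ → (ℕ → K × K × K × K) := fun i j =>
    (L (T (i + j)), M (T (i + j)), L (T (i + j) + ε/2), M (T (i + j) + ε/2)) with hudef
  obtain ⟨z, -, φ, hφ, hz⟩ :=
    (isCompact_univ (X := ℕ → K × K × K × K)).tendsto_subseq (x := u) (fun n => Set.mem_univ _)
  have hφtop : Tendsto φ atTop atTop := hφ.tendsto_atTop
  have hIdx : ∀ j : ℕ, Tendsto (fun i => φ i + j) atTop atTop := fun j =>
    tendsto_atTop_mono (fun i => Nat.le_add_right (φ i) j) hφtop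
  have hDlim : ∀ j, Tendsto (fun i => d (φ i + j)) atTop (𝓝 dstar) := fun j =>
    htend.comp (hIdx j)
  have hpt : ∀ j, Tendsto (fun i => u (φ i) j) atTop (𝓝 (z j)) := fun j =>
    ((continuous_apply j).tendsto z).comp hz
  set a : ℕ → K := fun j => (z j).1 with hadef
  set c : ℕ → K := fun j => (z j).2.1 with hcdef
  set p : ℕ → K := fun j => (z j).2.2.1 with hpdef
  set q : ℕ → K := fun j => (z j).2.2.2 with hqdef
  have hA : ∀ j, Tendsto (fun i => L (T (φ i + j))) atTop (𝓝 (a j)) := fun j =>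
    (continuous_fst.tendsto _).comp (hpt j)
  have hC : ∀ j, Tendsto (fun i => M (T (φ i + j))) atTop (𝓝 (c j)) := fun j =>
    ((continuous_fst.comp continuous_snd).tendsto _).comp (hpt j)
  have hP : ∀ j, Tendsto (fun i => L (T (φ i + j) + ε/2)) atTop (𝓝 (p j)) := fun j =>
    ((continuous_fst.comp (continuous_snd.comp continuous_snd)).tendsto _).comp (hpt j)
  have hQ : ∀ j, Tendsto (fun i => M (T (φ i + j) + ε/2)) atTop (𝓝 (q j)) := fun j =>
    ((continuous_snd.comp (continuous_snd.comp continuous_snd)).tendsto _).comp (hpt j)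
  -- limit facts
  have F1 : ∀ j, dist (a j) (c j) = dstar := fun j =>
    tendsto_nhds_unique ((hA j).dist (hC j)) (hDlim j)
  have F2 : ∀ j, dist (a j) (a (j+1)) = ε := by
    intro j
    refine tendsto_nhds_unique ((hA j).dist (hA (j+1))) ?_
    have he : (fun i => dist (L (T (φ i + j))) (L (T (φ i + (j+1))))) = fun _ => ε :=
      funext fun i => (hstep' (φ i + j)).1
    rw [he]
    exact tendsto_const_nhds
  have F3 : ∀ j, dist (a (j+1)) (c j) = dstar - ε := by
    intro j
    refine tendsto_nhds_unique ((hA (j+1)).dist (hC j)) ?_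
    have he : (fun i => dist (L (T (φ i + (j+1)))) (M (T (φ i + j)))) =
        fun i => d (φ i + j) - ε := funext fun i => hEn (φ i + j)
    rw [he]
    exact (hDlim j).sub_const ε
  have F5 : ∀ j, dist (c j) (c (j+1)) = ε := by
    intro j
    have hle : dist (c j) (c (j+1)) ≤ ε := by
      apply le_of_tendsto ((hC j).dist (hC (j+1)))
      filter_upwards with i using hmstep (φ i + j)
    have htri := dist_triangle (a (j+1)) (c j) (c (j+1))
    rw [F3 j, F1 (j+1)] at htri
    linarith
  have F6 : ∀ j, LiesBetween (c j) (a (j+1)) (c (j+1)) := by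
    intro j
    unfold LiesBetween
    rw [F3 j, F5 j, F1 (j+1)]
    ring
  have F7 : ∀ j, dist (a j) (p j) = ε/2 := by
    intro j
    refine tendsto_nhds_unique ((hA j).dist (hP j)) ?_
    have he : (fun i => dist (L (T (φ i + j))) (L (T (φ i + j) + ε/2))) = fun _ => ε/2 :=
      funext fun i => (hmidL (φ i + j)).1
    rw [he]
    exact tendsto_const_nhds
  have F8 : ∀ j, dist (p j) (a (j+1)) = ε/2 := by
    intro j
    refine tendsto_nhds_unique ((hP j).dist (hA (j+1))) ?_
    have he : (fun i => dist (L (T (φ i + j) + ε/2)) (L (T (φ i + (j+1))))) = fun _ => ε/2 :=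
      funext fun i => (hmidL (φ i + j)).2
    rw [he]
    exact tendsto_const_nhds
  have F9 : ∀ j, dist (c j) (q j) ≤ ε/2 := by
    intro j
    apply le_of_tendsto ((hC j).dist (hQ j))
    filter_upwards with i using (hmidM (φ i + j)).1
  have F10 : ∀ j, dist (q j) (c (j+1)) ≤ ε/2 := by
    intro j
    apply le_of_tendsto ((hQ j).dist (hC (j+1)))
    filter_upwards with i using (hmidM (φ i + j)).2
  have F11 : ∀ j, ε ≤ dist (p j) (q j) := by
    intro j
    apply ge_of_tendsto ((hP j).dist (hQ j))
    filter_upwards with i using hmidcap (φ i + j)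
  -- bound on distances in the compact space
  obtain ⟨Cb, hCb⟩ := Metric.isBounded_iff.mp (isCompact_univ (X := K)).isBounded
  rcases eq_or_lt_of_le hdstar with hdeg | hndeg
  · -- degenerate case: dstar = ε
    have hac : ∀ j, c j = a (j+1) := by
      intro j
      have h := F3 j
      rw [← hdeg, sub_self] at h
      exact (dist_eq_zero.mp h).symm
    have hq1 : ∀ j, dist (a (j+1)) (q j) = ε/2 := by
      intro j
      have h1 : dist (a (j+1)) (q j) ≤ ε/2 := by rw [← hac j]; exact F9 j
      have htri := dist_triangle (p j) (a (j+1)) (q j)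
      rw [F8 j] at htri
      have := F11 j
      linarith
    have hq2 : ∀ j, dist (q j) (a (j+2)) = ε/2 := by
      intro j
      have h1 : dist (q j) (a (j+2)) ≤ ε/2 := by rw [← hac (j+1)]; exact F10 j
      have htri := dist_triangle (a (j+1)) (q j) (a (j+2))
      rw [hq1 j, F2 (j+1)] at htri
      linarith
    have hpq : ∀ j, dist (p j) (q j) = ε := by
      intro j
      have htri := dist_triangle (p j) (a (j+1)) (q j)
      rw [F8 j, hq1 j] at htri
      have := F11 j
      linarith
    have hloc : ∀ j, LiesBetween (a (j+1)) (a j) (a (j+2)) := by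
      intro j
      have hb1 : LiesBetween (p j) (a j) (a (j+1)) := by
        unfold LiesBetween; rw [F7 j, F8 j, F2 j]; ring
      have hb2 : LiesBetween (a (j+1)) (p j) (q j) := by
        unfold LiesBetween; rw [F8 j, hq1 j, hpq j]; ring
      have hε2 : (0:ℝ) < ε/2 := by linarith
      have ne1 : a j ≠ p j := ne_of_le_dist hε2 (le_of_eq (F7 j).symm)
      have ne2 : a j ≠ a (j+1) := ne_of_le_dist hε (le_of_eq (F2 j).symm)
      have ne3 : a j ≠ q j := by
        refine ne_of_le_dist hε2 ?_
        have htri := dist_triangle (p j) (a j) (q j)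
        rw [dist_comm (p j) (a j), F7 j, hpq j] at htri
        linarith
      have ne4 : p j ≠ a (j+1) := ne_of_le_dist hε2 (le_of_eq (F8 j).symm)
      have ne5 : p j ≠ q j := ne_of_le_dist hε (le_of_eq (hpq j).symm)
      have ne6 : a (j+1) ≠ q j := ne_of_le_dist hε2 (le_of_eq (hq1 j).symm)
      obtain ⟨-, hout1⟩ := hbtw (a j) (p j) (a (j+1)) (q j) ne1 ne2 ne3 ne4 ne5 ne6 hb1 hb2
      -- hout1 : LiesBetween (a (j+1)) (a j) (q j)
      have hAq : dist (a j) (q j) = ε + ε/2 := by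
        unfold LiesBetween at hout1
        rw [F2 j, hq1 j] at hout1
        linarith
      have hb4 : LiesBetween (q j) (a (j+1)) (a (j+2)) := by
        unfold LiesBetween; rw [hq1 j, hq2 j, F2 (j+1)]; ring
      have me1 : a j ≠ a (j+1) := ne2
      have me2 : a j ≠ q j := ne3
      have me3 : a j ≠ a (j+2) := by
        refine ne_of_le_dist hε ?_
        have htri := dist_triangle (a j) (a (j+2)) (q j)
        rw [dist_comm (a (j+2)) (q j), hq2 j, hAq] at htri
        linarith
      have me4 : a (j+1) ≠ q j := ne6
      have me5 : a (j+1) ≠ a (j+2) := ne_of_le_dist hε (le_of_eq (F2 (j+1)).symm)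
      have me6 : q j ≠ a (j+2) := ne_of_le_dist hε2 (le_of_eq (hq2 j).symm)
      exact (hbtw (a j) (a (j+1)) (q j) (a (j+2)) me1 me2 me3 me4 me5 me6 hout1 hb4).1
    have hchain := chainA hbtw hε a F2 hloc
    obtain ⟨n, hn⟩ := exists_nat_gt (Cb / ε)
    have h1 := hchain n
    have h2 := hCb (Set.mem_univ (a 0)) (Set.mem_univ (a n))
    rw [h1] at h2
    rw [div_lt_iff₀ hε] at hn
    linarith
  · -- non-degenerate case: ε < dstar
    have hchain := chainB hbtw hε hndeg a c F1 F2 F3 F5 F6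
    obtain ⟨n, hn⟩ := exists_nat_gt (Cb / ε)
    have h1 := hchain n
    have h2 := hCb (Set.mem_univ (a 0)) (Set.mem_univ (c n))
    rw [h1] at h2
    rw [div_lt_iff₀ hε] at hn
    linarith
end

section
/- Let (K,d) be a compact geodesic metric space whose metric is convex, i.e., for any two geodesic paths reparametrized affinely as γ₁, γ₂ : [0,1] → K one has d(γ₁(t), γ₂(t)) ≤ (1−t)·d(γ₁(0), γ₂(0)) + t·d(γ₁(1), γ₂(1)) for all t ∈ [0,1]. Then for every ε > 0 and every ε-simple-pursuit curve ζ = (L, M) : [0, ∞) → K × K there exists a time T > 0 such that d(L(T), M(T)) < ε; in particular, Lion wins the lion-and-man game with ε-capture in (K,d). -/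
open Filter Topology

variable {K : Type*} [MetricSpace K]

/-- `γ` is a geodesic path reparametrized affinely on `[0, 1]`. -/
def IsAffineGeod {K : Type*} [MetricSpace K] (γ : ℝ → K) : Prop :=
  ∀ s ∈ Set.Icc (0 : ℝ) 1, ∀ t ∈ Set.Icc (0 : ℝ) 1,
    dist (γ s) (γ t) = |s - t| * dist (γ 0) (γ 1)

/-- The metric of `K` is convex: for any two affinely-reparametrized geodesic paths
`γ₁, γ₂ : [0,1] → K`, `d(γ₁ t, γ₂ t) ≤ (1-t) d(γ₁ 0, γ₂ 0) + t d(γ₁ 1, γ₂ 1)`. -/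
def ConvexMetric (K : Type*) [MetricSpace K] : Prop :=
  ∀ γ₁ γ₂ : ℝ → K, IsAffineGeod γ₁ → IsAffineGeod γ₂ →
    ∀ t ∈ Set.Icc (0 : ℝ) 1,
      dist (γ₁ t) (γ₂ t) ≤ (1 - t) * dist (γ₁ 0) (γ₂ 0) + t * dist (γ₁ 1) (γ₂ 1)

lemma exists_affineGeod (hK : GeodesicSpace K) (A B : K) :
    ∃ γ : ℝ → K, IsAffineGeod γ ∧ γ 0 = A ∧ γ 1 = B := by
  obtain ⟨a, b, γ₀, hab, hgeo, ha, hb⟩ := hK A B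
  refine ⟨fun t => γ₀ (a + t * (b - a)), ?_, by simpa, by simpa⟩
  intro s hs t ht
  have hmem : ∀ u ∈ Set.Icc (0:ℝ) 1, a + u * (b - a) ∈ Set.Icc a b := by
    intro u hu
    constructor <;> nlinarith [hu.1, hu.2]
  have h01 : dist (γ₀ (a + (0:ℝ) * (b-a))) (γ₀ (a + (1:ℝ) * (b-a))) = b - a := by
    rw [hgeo _ (hmem 0 (by norm_num)) _ (hmem 1 (by norm_num))]
    rw [abs_of_nonpos (by linarith)]; ring
  rw [hgeo _ (hmem s hs) _ (hmem t ht), h01]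
  rw [show a + s * (b-a) - (a + t * (b-a)) = (s - t) * (b - a) by ring, abs_mul,
    abs_of_nonneg (by linarith : (0:ℝ) ≤ b - a)]

/-- B3: uniqueness of affine geodesics with given endpoints (convex metric). -/

lemma exists_affineGeod_through (hK : GeodesicSpace K) {A B C : K}
    (hC : LiesBetween C A B) (hAC : 0 < dist A C) (hCB : 0 < dist C B) :
    ∃ γ : ℝ → K, IsAffineGeod γ ∧ γ 0 = A ∧ γ 1 = B ∧ γ (dist A C / dist A B) = C := by
  obtain ⟨γ₁, hγ₁, hγ₁0, hγ₁1⟩ := exists_affineGeod hK A C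
  obtain ⟨γ₂, hγ₂, hγ₂0, hγ₂1⟩ := exists_affineGeod hK C B
  set D := dist A B with hD
  set p := dist A C with hp
  set q := dist C B with hq
  have hpq : p + q = D := hC
  have hDpos : 0 < D := by linarith
  set t₀ : ℝ := p / D with ht₀
  have ht₀pos : 0 < t₀ := div_pos hAC hDpos
  have ht₀lt : t₀ < 1 := by rw [ht₀, div_lt_one hDpos]; linarith
  have hd₁ : dist (γ₁ 0) (γ₁ 1) = p := by rw [hγ₁0, hγ₁1]
  have hd₂ : dist (γ₂ 0) (γ₂ 1) = q := by rw [hγ₂0, hγ₂1]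
  set γ : ℝ → K := fun t => if t ≤ t₀ then γ₁ (t / t₀) else γ₂ ((t - t₀) / (1 - t₀)) with hγ
  have hγval1 : ∀ u : ℝ, u ≤ t₀ → γ u = γ₁ (u / t₀) := fun u hu => if_pos hu
  have hγval2 : ∀ u : ℝ, ¬ (u ≤ t₀) → γ u = γ₂ ((u - t₀) / (1 - t₀)) := fun u hu => if_neg hu
  have hγ0 : γ 0 = A := by rw [hγval1 0 (le_of_lt ht₀pos), zero_div, hγ₁0]
  have hγt₀ : γ t₀ = C := by rw [hγval1 t₀ le_rfl, div_self (ne_of_gt ht₀pos), hγ₁1]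
  have hγ1 : γ 1 = B := by
    rw [hγval2 1 (not_le.mpr ht₀lt), div_self (by linarith : (1:ℝ) - t₀ ≠ 0), hγ₂1]
  -- distances to A, B, C at each parameter
  have hpt₀ : p = t₀ * D := by rw [ht₀]; field_simp
  have hqt₀ : q = (1 - t₀) * D := by rw [ht₀]; field_simp; linarith
  clear_value t₀
  clear ht₀
  have h1tne : (1:ℝ) - t₀ ≠ 0 := by linarith
  have ht₀ne : t₀ ≠ 0 := ne_of_gt ht₀pos
  have key1 : ∀ u : ℝ, 0 ≤ u → u ≤ t₀ →
      dist A (γ u) = u * D ∧ dist (γ u) C = (t₀ - u) * D := by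
    intro u hu0 hut
    rw [hγval1 u hut, ← hγ₁0, ← hγ₁1]
    have hmem : u / t₀ ∈ Set.Icc (0:ℝ) 1 :=
      ⟨div_nonneg hu0 (le_of_lt ht₀pos), by rw [div_le_one ht₀pos]; exact hut⟩
    constructor
    · rw [hγ₁ 0 (by norm_num) _ hmem, hd₁, hpt₀]
      rw [abs_of_nonpos (by linarith [hmem.1] : 0 - u / t₀ ≤ 0)]
      field_simp
      ring
    · rw [hγ₁ _ hmem 1 (by norm_num), hd₁, hpt₀]
      rw [abs_of_nonpos (by linarith [hmem.2] : u / t₀ - 1 ≤ 0)]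
      field_simp
      ring
  have key2 : ∀ u : ℝ, t₀ ≤ u → u ≤ 1 →
      dist C (γ u) = (u - t₀) * D ∧ dist (γ u) B = (1 - u) * D := by
    intro u hut hu1
    rcases le_or_gt u t₀ with h | h
    · have : u = t₀ := le_antisymm h hut
      subst this
      rw [hγt₀]
      simp [hqt₀.symm, hq]
    · rw [hγval2 u (not_le.mpr h), ← hγ₂0, ← hγ₂1]
      have hmem : (u - t₀) / (1 - t₀) ∈ Set.Icc (0:ℝ) 1 :=
        ⟨div_nonneg (by linarith) (by linarith), by rw [div_le_one (by linarith)]; linarith⟩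
      constructor
      · rw [hγ₂ 0 (by norm_num) _ hmem, hd₂, hqt₀]
        rw [abs_of_nonpos (by linarith [hmem.1] : 0 - (u - t₀)/(1 - t₀) ≤ 0)]
        field_simp
        ring
      · rw [hγ₂ _ hmem 1 (by norm_num), hd₂, hqt₀]
        rw [abs_of_nonpos (by linarith [hmem.2] : (u - t₀)/(1 - t₀) - 1 ≤ 0)]
        field_simp
        ring
  -- full endpoint distances at every parameter in [0,1]
  have keyA : ∀ u ∈ Set.Icc (0:ℝ) 1, dist A (γ u) = u * D ∧ dist (γ u) B = (1 - u) * D := by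
    intro u hu
    rcases le_or_gt u t₀ with h | h
    · obtain ⟨h1, h2⟩ := key1 u hu.1 h
      refine ⟨h1, le_antisymm ?_ ?_⟩
      · calc dist (γ u) B ≤ dist (γ u) C + dist C B := dist_triangle _ _ _
          _ = (t₀ - u) * D + q := by rw [h2]
          _ = (1 - u) * D := by rw [hqt₀]; ring
      · have := dist_triangle A (γ u) B
        have hAB : dist A B = D := rfl
        nlinarith [h1]
    · obtain ⟨h1, h2⟩ := key2 u (le_of_lt h) hu.2
      refine ⟨le_antisymm ?_ ?_, h2⟩
      · calc dist A (γ u) ≤ dist A C + dist C (γ u) := dist_triangle _ _ _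
          _ = p + (u - t₀) * D := by rw [h1]
          _ = u * D := by rw [hpt₀]; ring
      · have := dist_triangle A (γ u) B
        nlinarith [h2]
  -- pair distances, ordered case
  have keyC : ∀ u ∈ Set.Icc (0:ℝ) 1, dist (γ u) C = |u - t₀| * D := by
    intro u hu
    rcases le_or_gt u t₀ with h | h
    · rw [(key1 u hu.1 h).2, abs_of_nonpos (by linarith), neg_sub]
    · rw [dist_comm, (key2 u (le_of_lt h) hu.2).1, abs_of_pos (by linarith)]
  have pair : ∀ s ∈ Set.Icc (0:ℝ) 1, ∀ t ∈ Set.Icc (0:ℝ) 1, s ≤ t →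
      dist (γ s) (γ t) = (t - s) * D := by
    intro s hs t ht hst
    refine le_antisymm ?_ ?_
    · rcases le_or_gt t t₀ with h | h
      · -- both in branch 1
        apply le_of_eq
        rw [hγval1 s (le_trans hst h), hγval1 t h]
        have hs' : s / t₀ ∈ Set.Icc (0:ℝ) 1 :=
          ⟨div_nonneg hs.1 (le_of_lt ht₀pos), by rw [div_le_one ht₀pos]; exact le_trans hst h⟩
        have ht' : t / t₀ ∈ Set.Icc (0:ℝ) 1 :=
          ⟨div_nonneg ht.1 (le_of_lt ht₀pos), by rw [div_le_one ht₀pos]; exact h⟩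
        rw [hγ₁ _ hs' _ ht', hd₁, hpt₀, div_sub_div_same,
          abs_of_nonpos (by apply div_nonpos_of_nonpos_of_nonneg <;> linarith)]
        field_simp
        ring
      · rcases le_or_gt s t₀ with h' | h'
        · -- cross: via C
          calc dist (γ s) (γ t) ≤ dist (γ s) C + dist C (γ t) := dist_triangle _ _ _
            _ = (t₀ - s) * D + (t - t₀) * D := by
                rw [(key1 s hs.1 h').2, (key2 t (le_of_lt h) ht.2).1]
            _ = (t - s) * D := by ring
        · -- both in branch 2
          apply le_of_eq
          rw [hγval2 s (not_le.mpr h'), hγval2 t (not_le.mpr h)]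
          have hs' : (s - t₀) / (1 - t₀) ∈ Set.Icc (0:ℝ) 1 :=
            ⟨div_nonneg (by linarith) (by linarith), by rw [div_le_one (by linarith)]; linarith [hs.2]⟩
          have ht' : (t - t₀) / (1 - t₀) ∈ Set.Icc (0:ℝ) 1 :=
            ⟨div_nonneg (by linarith) (by linarith), by rw [div_le_one (by linarith)]; linarith [ht.2]⟩
          rw [hγ₂ _ hs' _ ht', hd₂, hqt₀, div_sub_div_same,
            abs_of_nonpos (by apply div_nonpos_of_nonpos_of_nonneg <;> linarith)]
          field_simp
          ring
    · have h1 := (keyA s hs).1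
      have h2 := (keyA t ht).1
      have := dist_triangle A (γ s) (γ t)
      linarith
  refine ⟨γ, ?_, hγ0, hγ1, hγt₀⟩
  intro s hs t ht
  have hD01 : dist (γ 0) (γ 1) = D := by rw [hγ0, hγ1]
  rcases le_total s t with h | h
  · rw [pair s hs t ht h, hD01, abs_of_nonpos (by linarith), neg_sub]
  · rw [dist_comm, pair t ht s hs h, hD01, abs_of_nonneg (by linarith : (0:ℝ) ≤ s - t)]

lemma affineGeod_unique (hconv : ConvexMetric K) {γ₁ γ₂ : ℝ → K}
    (h₁ : IsAffineGeod γ₁) (h₂ : IsAffineGeod γ₂) (h0 : γ₁ 0 = γ₂ 0) (h1 : γ₁ 1 = γ₂ 1) :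
    ∀ t ∈ Set.Icc (0:ℝ) 1, γ₁ t = γ₂ t := by
  intro t ht
  have := hconv γ₁ γ₂ h₁ h₂ t ht
  rw [h0, h1, dist_self, dist_self] at this
  have : dist (γ₁ t) (γ₂ t) ≤ 0 := by linarith
  exact dist_eq_zero.mp (le_antisymm this dist_nonneg)

/-- B7: pure-triangle sub-betweenness. -/

lemma dist_add_of_between {A B C X : K} (hB : LiesBetween B A C) (hX : LiesBetween X B C) :
    dist A X = dist A B + dist B X := by
  unfold LiesBetween at hB hX
  have t1 := dist_triangle A B X
  have t2 := dist_triangle A X C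
  have t3 := dist_triangle X B C  -- not needed maybe
  linarith [dist_nonneg (x := X) (y := C)]

lemma constant_isAffineGeod (A : K) : IsAffineGeod (fun _ : ℝ => A) := by
  intro s _ t _; simp

/-- B4: two points between `U` and `V` are at distance `|dist U X - dist U Y|`. -/

lemma dist_of_two_between (hK : GeodesicSpace K) (hconv : ConvexMetric K) {U V X Y : K}
    (hX : LiesBetween X U V) (hY : LiesBetween Y U V)
    (hUX : 0 < dist U X) (hXV : 0 < dist X V) (hUY : 0 < dist U Y) (hYV : 0 < dist Y V) :
    dist X Y = |dist U X - dist U Y| := by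
  have hD : (0:ℝ) < dist U V := by unfold LiesBetween at hX; linarith
  obtain ⟨γ₁, hγ₁, h10, h11, h1X⟩ := exists_affineGeod_through hK hX hUX hXV
  obtain ⟨γ₂, hγ₂, h20, h21, h2Y⟩ := exists_affineGeod_through hK hY hUY hYV
  have huniq := affineGeod_unique hconv hγ₁ hγ₂ (h10.trans h20.symm) (h11.trans h21.symm)
  have htX : dist U X / dist U V ∈ Set.Icc (0:ℝ) 1 := by
    constructor
    · positivity
    · rw [div_le_one hD]; unfold LiesBetween at hX; linarith [dist_nonneg (x := X) (y := V)]
  have htY : dist U Y / dist U V ∈ Set.Icc (0:ℝ) 1 := by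
    constructor
    · positivity
    · rw [div_le_one hD]; unfold LiesBetween at hY; linarith [dist_nonneg (x := Y) (y := V)]
  have hY' : γ₁ (dist U Y / dist U V) = Y := by rw [huniq _ htY]; exact h2Y
  have hD01 : dist (γ₁ 0) (γ₁ 1) = dist U V := by rw [h10, h11]
  calc dist X Y = dist (γ₁ (dist U X / dist U V)) (γ₁ (dist U Y / dist U V)) := by
        rw [h1X, hY']
    _ = |dist U X / dist U V - dist U Y / dist U V| * dist U V := by
        rw [hγ₁ _ htX _ htY, hD01]
    _ = |dist U X - dist U Y| := by
        rw [div_sub_div_same, abs_div, abs_of_pos hD, div_mul_cancel₀ _ (ne_of_gt hD)]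

/-- B5: concatenation of betweenness (convex metric). -/

lemma dist_concat (hK : GeodesicSpace K) (hconv : ConvexMetric K) {A B C D : K}
    (hB : LiesBetween B A C) (hC : LiesBetween C B D) (hBC : 0 < dist B C) :
    dist A D = dist A B + dist B C + dist C D := by
  rcases eq_or_lt_of_le (dist_nonneg (x := C) (y := D)) with hm | hm
  · have hCD : C = D := dist_eq_zero.mp hm.symm
    subst hCD
    unfold LiesBetween at hB
    simp only [dist_self, add_zero]
    linarith
  · obtain ⟨γ, hγ, hγ0, hγ1, hγC⟩ := exists_affineGeod_through hK hC hBC hm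
    set q := dist B C with hq
    set m := dist C D with hm'
    have hBD : dist B D = q + m := by unfold LiesBetween at hC; linarith
    have ht₀ : dist B C / dist B D = q / (q + m) := by rw [hBD]
    have ht₀mem : q / (q + m) ∈ Set.Icc (0:ℝ) 1 := by
      constructor
      · positivity
      · rw [div_le_one (by linarith)]; linarith
    have hcv := hconv γ (fun _ => A) hγ (constant_isAffineGeod A) (q / (q+m)) ht₀mem
    have hγC' : γ (q / (q+m)) = C := by rw [← ht₀]; exact hγC
    rw [hγ0, hγ1, hγC'] at hcv
    -- hcv : dist C A ≤ (1 - q/(q+m)) * dist B A + (q/(q+m)) * dist D A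
    have hCA : dist C A = dist A B + q := by rw [dist_comm]; exact hB.symm
    have hBA : dist B A = dist A B := dist_comm B A
    have hDA : dist D A = dist A D := dist_comm D A
    rw [hCA, hBA, hDA] at hcv
    have hub : dist A D ≤ dist A B + q + m := by
      calc dist A D ≤ dist A B + dist B D := dist_triangle A B D
        _ = dist A B + q + m := by rw [hBD]; ring
    have hqm : (0:ℝ) < q + m := by linarith
    refine le_antisymm hub ?_
    have hne : (q + m) ≠ 0 := ne_of_gt hqm
    have hcv' : (q + m) * (dist A B + q) ≤ m * dist A B + q * dist A D := by
      have h1 : (1 - q/(q+m)) = m / (q+m) := by field_simp; ring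
      calc (q+m) * (dist A B + q)
          ≤ (q+m) * ((1 - q/(q+m)) * dist A B + q/(q+m) * dist A D) :=
            mul_le_mul_of_nonneg_left hcv (le_of_lt hqm)
        _ = m * dist A B + q * dist A D := by rw [h1]; field_simp
    exact (mul_le_mul_iff_right₀ hBC).mp (by nlinarith : q * (dist A B + q + m) ≤ q * dist A D)

/-- Chain lemma: an infinite chain of collinear points marches off linearly. -/

lemma eq_of_two_between (hK : GeodesicSpace K) (hconv : ConvexMetric K) {U V X Y : K}
    (hX : LiesBetween X U V) (hY : LiesBetween Y U V) (hUXY : dist U X = dist U Y)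
    (hUX : 0 < dist U X) (hXV : 0 < dist X V) (hYV : 0 < dist Y V) : X = Y := by
  have h := dist_of_two_between hK hconv hX hY hUX hXV (hUXY ▸ hUX) hYV
  rw [hUXY, sub_self, abs_zero] at h
  exact dist_eq_zero.mp h

lemma step_lemma (hK : GeodesicSpace K) (hconv : ConvexMetric K) {ε r : ℝ}
    (hε : 0 < ε) (hr : ε < r) {a a' a'' b b' : K}
    (h1 : dist a b = r) (h2 : dist a' b' = r) (h3 : dist a a' = ε) (h4 : dist a' b = r - ε)
    (h5 : dist b b' = ε) (h6 : dist a' a'' = ε) (h7 : dist a'' b' = r - ε) :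
    dist a a'' = 2 * ε := by
  have hba'b' : LiesBetween b a' b' := by unfold LiesBetween; rw [h4, h5, h2]; ring
  have ha''a'b' : LiesBetween a'' a' b' := by unfold LiesBetween; rw [h6, h7, h2]; ring
  have hd := dist_of_two_between hK hconv ha''a'b' hba'b'
    (by rw [h6]; exact hε) (by rw [h7]; linarith) (by rw [h4]; linarith) (by rw [h5]; exact hε)
  rw [h6, h4] at hd
  have ha'ab : LiesBetween a' a b := by unfold LiesBetween; rw [h3, h4, h1]; ring
  rcases le_or_gt (2*ε) r with h2e | h2e
  · have habs : dist a'' b = r - 2*ε := by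
      rw [hd, abs_of_nonpos (by linarith)]; ring
    have ha''a'b : LiesBetween a'' a' b := by unfold LiesBetween; rw [h6, habs, h4]; ring
    have hfin := dist_add_of_between ha'ab ha''a'b
    rw [h3, h6] at hfin
    rw [hfin]; ring
  · have habs : dist b a'' = 2*ε - r := by
      rw [dist_comm, hd, abs_of_nonneg (by linarith)]; ring
    have hba'a'' : LiesBetween b a' a'' := by unfold LiesBetween; rw [h4, habs, h6]; ring
    have hfin := dist_concat hK hconv ha'ab hba'a'' (by rw [h4]; linarith)
    rw [h3, h4, habs] at hfin
    rw [hfin]; ring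

lemma chain_dist (hK : GeodesicSpace K) (hconv : ConvexMetric K) (X : ℕ → K) (c : ℝ)
    (hc : 0 < c) (hd : ∀ n, dist (X n) (X (n+1)) = c)
    (hbtw : ∀ n, LiesBetween (X (n+1)) (X n) (X (n+2))) :
    ∀ n, dist (X 0) (X n) = n * c := by
  have main : ∀ n, dist (X 0) (X n) = n * c ∧ dist (X 0) (X (n+1)) = (n+1) * c := by
    intro n
    induction n with
    | zero => simp [hd 0]
    | succ n ih =>
      obtain ⟨h1, h2⟩ := ih
      refine ⟨by rw [h2]; norm_cast, ?_⟩
      have hmid : LiesBetween (X n) (X 0) (X (n+1)) := by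
        unfold LiesBetween
        rw [h1, hd n, h2]; push_cast; ring
      have hkey := dist_concat hK hconv hmid (hbtw n) (by rw [hd n]; exact hc)
      rw [hd n, hd (n+1), h1] at hkey
      rw [hkey]
      push_cast; ring
  exact fun n => (main n).1

set_option maxHeartbeats 1600000 in
/-- In a compact geodesic space with convex metric, every `ε`-simple-pursuit curve
achieves `ε`-capture at some positive time: Lion wins. -/
theorem stmt_12 {K : Type*} [MetricSpace K] [CompactSpace K] (hK : GeodesicSpace K)
    (hconv : ConvexMetric K) (ε : ℝ) (hε : 0 < ε)
    (L M : ℝ → K) (hζ : SimplePursuitCurve ε L M) :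
    ∃ T : ℝ, 0 < T ∧ dist (L T) (M T) < ε := by
  obtain ⟨hL, hM, hpursuit⟩ := hζ
  by_contra hcon
  push_neg at hcon
  -- hcon : ∀ T, 0 < T → ε ≤ dist (L T) (M T)
  have hLd : ∀ s t : ℝ, 0 ≤ s → 0 ≤ t → dist (L s) (L t) ≤ |s - t| := by
    intro s t hs ht
    have := hL.dist_le_mul s hs t ht
    simpa [Real.dist_eq] using this
  have hMd : ∀ s t : ℝ, 0 ≤ s → 0 ≤ t → dist (M s) (M t) ≤ |s - t| := by
    intro s t hs ht
    have := hM.dist_le_mul s hs t ht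
    simpa [Real.dist_eq] using this
  set τ : ℕ → ℝ := fun i => (i:ℝ) * ε with hτdef
  set d : ℕ → ℝ := fun i => dist (L (τ i)) (M (τ i)) with hddef
  have hτ0 : ∀ i : ℕ, (0:ℝ) ≤ τ i := fun i => mul_nonneg (Nat.cast_nonneg i) hε.le
  have hτsucc : ∀ i : ℕ, τ (i+1) = τ i + ε := by
    intro i; simp only [hτdef]; push_cast; ring
  have hτcast : ∀ i : ℕ, ((i:ℝ) + 1) * ε = τ (i+1) := by
    intro i; simp only [hτdef]; push_cast; ring
  -- F1 : every discrete distance is at least ε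
  have hdge : ∀ i, ε ≤ d i := by
    intro i
    cases i with
    | zero =>
      by_contra h0
      push_neg at h0
      have hτz : τ 0 = 0 := by simp [hτdef]
      have hd0 : d 0 = dist (L 0) (M 0) := by simp only [hddef, hτz]
      have hT : (0:ℝ) < (ε - d 0) / 4 := by linarith
      have h1 := hcon _ hT
      have h2 := hLd ((ε - d 0)/4) 0 hT.le le_rfl
      have h3 := hMd 0 ((ε - d 0)/4) le_rfl hT.le
      have h4 := dist_triangle (L ((ε - d 0)/4)) (L 0) (M ((ε - d 0)/4))
      have h5 := dist_triangle (L 0) (M 0) (M ((ε - d 0)/4))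
      rw [abs_of_nonneg (by linarith : (0:ℝ) ≤ (ε - d 0)/4 - 0)] at h2
      rw [abs_of_nonpos (by linarith : (0:ℝ) - (ε - d 0)/4 ≤ 0)] at h3
      linarith [h1, h2, h3, h4, h5, hd0]
    | succ n =>
      have : (0:ℝ) < τ (n+1) := by
        rw [hτsucc]; linarith [hτ0 n]
      exact hcon _ this
  have hp : ∀ i, dist (L (τ i)) (L (τ (i+1))) = ε ∧
      LiesBetween (L (τ (i+1))) (L (τ i)) (M (τ i)) := by
    intro i
    have := hpursuit i (hdge i)
    rw [hτcast i] at this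
    exact this
  have P1 : ∀ i, dist (L (τ i)) (L (τ (i+1))) = ε := fun i => (hp i).1
  have P2 : ∀ i, dist (L (τ (i+1))) (M (τ i)) = d i - ε := by
    intro i
    have hb := (hp i).2
    unfold LiesBetween at hb
    rw [P1 i] at hb
    simp only [hddef]
    linarith
  have P3 : ∀ i, dist (M (τ i)) (M (τ (i+1))) ≤ ε := by
    intro i
    have h := hMd (τ i) (τ (i+1)) (hτ0 i) (hτ0 (i+1))
    have habs : |τ i - τ (i+1)| = ε := by
      rw [hτsucc i, abs_of_nonpos (by linarith)]; ring
    rw [habs] at h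
    exact h
  have P45 : ∀ i, d (i+1) ≤ d i - ε + dist (M (τ i)) (M (τ (i+1))) := by
    intro i
    have t1 := dist_triangle (L (τ (i+1))) (M (τ i)) (M (τ (i+1)))
    rw [P2 i] at t1
    simp only [hddef]
    linarith
  have P4 : ∀ i, d (i+1) ≤ d i := fun i => by linarith [P45 i, P3 i]
  have P5 : ∀ i, ε - (d i - d (i+1)) ≤ dist (M (τ i)) (M (τ (i+1))) := fun i => by
    linarith [P45 i]
  -- intermediate-time facts at τ i + ε/2
  have hmid0 : ∀ i : ℕ, (0:ℝ) ≤ τ i + ε/2 := fun i => by linarith [hτ0 i]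
  have P67 : ∀ i, dist (L (τ i)) (L (τ i + ε/2)) = ε/2 ∧
      dist (L (τ i + ε/2)) (L (τ (i+1))) = ε/2 := by
    intro i
    have h1 : dist (L (τ i)) (L (τ i + ε/2)) ≤ ε/2 := by
      have := hLd (τ i) (τ i + ε/2) (hτ0 i) (hmid0 i)
      rwa [abs_of_nonpos (by linarith), neg_sub, add_sub_cancel_left] at this
    have h2 : dist (L (τ i + ε/2)) (L (τ (i+1))) ≤ ε/2 := by
      have h := hLd (τ i + ε/2) (τ (i+1)) (hmid0 i) (hτ0 (i+1))
      have habs : |τ i + ε/2 - τ (i+1)| = ε/2 := by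
        rw [hτsucc i, abs_of_nonpos (by linarith)]; ring
      rw [habs] at h
      exact h
    have t1 := dist_triangle (L (τ i)) (L (τ i + ε/2)) (L (τ (i+1)))
    rw [P1 i] at t1
    constructor <;> linarith
  have P8 : ∀ i, dist (M (τ i)) (M (τ i + ε/2)) ≤ ε/2 := by
    intro i
    have := hMd (τ i) (τ i + ε/2) (hτ0 i) (hmid0 i)
    rwa [abs_of_nonpos (by linarith), neg_sub, add_sub_cancel_left] at this
  have P8' : ∀ i, ε/2 - (d i - d (i+1)) ≤ dist (M (τ i)) (M (τ i + ε/2)) := by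
    intro i
    have t1 := dist_triangle (M (τ i)) (M (τ i + ε/2)) (M (τ (i+1)))
    have h2 : dist (M (τ i + ε/2)) (M (τ (i+1))) ≤ ε/2 := by
      have h := hMd (τ i + ε/2) (τ (i+1)) (hmid0 i) (hτ0 (i+1))
      have habs : |τ i + ε/2 - τ (i+1)| = ε/2 := by
        rw [hτsucc i, abs_of_nonpos (by linarith)]; ring
      rw [habs] at h
      exact h
    linarith [P5 i]
  have P9 : ∀ i, dist (M (τ i + ε/2)) (M (τ (i+1))) ≤ ε/2 := by
    intro i
    have h := hMd (τ i + ε/2) (τ (i+1)) (hmid0 i) (hτ0 (i+1))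
    have habs : |τ i + ε/2 - τ (i+1)| = ε/2 := by
      rw [hτsucc i, abs_of_nonpos (by linarith)]; ring
    rw [habs] at h
    exact h
  have P9' : ∀ i, ε/2 - (d i - d (i+1)) ≤ dist (M (τ i + ε/2)) (M (τ (i+1))) := by
    intro i
    have t1 := dist_triangle (M (τ i)) (M (τ i + ε/2)) (M (τ (i+1)))
    linarith [P5 i, P8 i]
  have P10 : ∀ i, ε ≤ dist (L (τ i + ε/2)) (M (τ i + ε/2)) ∧
      dist (L (τ i + ε/2)) (M (τ i + ε/2)) ≤ d i := by
    intro i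
    constructor
    · exact hcon _ (by linarith [hτ0 i])
    · have t1 := dist_triangle (L (τ i + ε/2)) (L (τ (i+1))) (M (τ i + ε/2))
      have t2 := dist_triangle (L (τ (i+1))) (M (τ i)) (M (τ i + ε/2))
      rw [P2 i] at t2
      linarith [(P67 i).2, P8 i, t1, t2]
  -- limit of d
  have hbdd : BddBelow (Set.range d) := ⟨ε, by rintro x ⟨i, rfl⟩; exact hdge i⟩
  set r : ℝ := ⨅ i, d i with hrdef
  have hdtend : Tendsto d atTop (𝓝 r) :=
    tendsto_atTop_ciInf (antitone_nat_of_succ_le P4) hbdd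
  have hrε : ε ≤ r := le_ciInf hdge
  -- subsequence extraction in the product space
  set F : ℕ → ℕ → K × K × K × K := fun i k =>
    (L (τ (i+k)), M (τ (i+k)), L (τ (i+k) + ε/2), M (τ (i+k) + ε/2)) with hFdef
  obtain ⟨a, φ, hφmono, hφtend⟩ := SeqCompactSpace.tendsto_subseq F
  have hcoord : ∀ k, Tendsto (fun n => F (φ n) k) atTop (𝓝 (a k)) :=
    fun k => (tendsto_pi_nhds.mp hφtend) k
  set A : ℕ → K := fun k => (a k).1 with hAdef
  set B : ℕ → K := fun k => (a k).2.1 with hBdef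
  set P : ℕ → K := fun k => (a k).2.2.1 with hPdef
  set Q : ℕ → K := fun k => (a k).2.2.2 with hQdef
  have hA : ∀ k, Tendsto (fun n => L (τ (φ n + k))) atTop (𝓝 (A k)) :=
    fun k => (continuous_fst.tendsto _).comp (hcoord k)
  have hB : ∀ k, Tendsto (fun n => M (τ (φ n + k))) atTop (𝓝 (B k)) :=
    fun k => (continuous_fst.tendsto _).comp ((continuous_snd.tendsto _).comp (hcoord k))
  have hP : ∀ k, Tendsto (fun n => L (τ (φ n + k) + ε/2)) atTop (𝓝 (P k)) :=
    fun k => (continuous_fst.tendsto _).comp ((continuous_snd.tendsto _).comp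
      ((continuous_snd.tendsto _).comp (hcoord k)))
  have hQ : ∀ k, Tendsto (fun n => M (τ (φ n + k) + ε/2)) atTop (𝓝 (Q k)) :=
    fun k => (continuous_snd.tendsto _).comp ((continuous_snd.tendsto _).comp
      ((continuous_snd.tendsto _).comp (hcoord k)))
  have hφk : ∀ k : ℕ, Tendsto (fun n => φ n + k) atTop atTop := by
    intro k
    apply tendsto_atTop_atTop_of_monotone (fun n m hnm => by
      exact add_le_add_left (hφmono.monotone hnm) k)
    intro b
    exact ⟨b, le_trans (StrictMono.le_apply hφmono) (Nat.le_add_right _ _)⟩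
  have hdk : ∀ k, Tendsto (fun n => d (φ n + k)) atTop (𝓝 r) :=
    fun k => hdtend.comp (hφk k)
  have herr : ∀ k, Tendsto (fun n => d (φ n + k) - d (φ n + k + 1)) atTop (𝓝 0) := by
    intro k
    have := (hdk k).sub (hdk (k+1))
    simpa [add_assoc] using this
  -- limit relations
  have hAB : ∀ k, dist (A k) (B k) = r := by
    intro k
    refine tendsto_nhds_unique ((hA k).dist (hB k)) (hdk k)
  have hAA : ∀ k, dist (A k) (A (k+1)) = ε := by
    intro k
    refine tendsto_nhds_unique ((hA k).dist (hA (k+1)))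
      (Tendsto.congr (fun n => (P1 (φ n + k)).symm) tendsto_const_nhds)
  have hA'B : ∀ k, dist (A (k+1)) (B k) = r - ε := by
    intro k
    refine tendsto_nhds_unique ((hA (k+1)).dist (hB k))
      (Tendsto.congr (fun n => (P2 (φ n + k)).symm) ((hdk k).sub_const ε))
  have squeeze : ∀ (f err : ℕ → ℝ) (x c : ℝ), Tendsto f atTop (𝓝 x) →
      Tendsto err atTop (𝓝 0) →
      (∀ n, f n ≤ c) → (∀ n, c - err n ≤ f n) → x = c := by
    intro f err x c hf herr' hub hlb
    have h1 : x ≤ c := le_of_tendsto hf (Eventually.of_forall hub)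
    have h2 : c ≤ x := by
      have hc : Tendsto (fun n => c - err n) atTop (𝓝 c) := by
        simpa using (tendsto_const_nhds (x := c) (f := atTop)).sub herr'
      exact le_of_tendsto_of_tendsto' hc hf hlb
    linarith
  have hBB : ∀ k, dist (B k) (B (k+1)) = ε := by
    intro k
    exact squeeze _ _ _ _ ((hB k).dist (hB (k+1))) (herr k)
      (fun n => P3 (φ n + k)) (fun n => P5 (φ n + k))
  have hAP : ∀ k, dist (A k) (P k) = ε/2 := by
    intro k
    refine tendsto_nhds_unique ((hA k).dist (hP k))
      (Tendsto.congr (fun n => ((P67 (φ n + k)).1).symm) tendsto_const_nhds)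
  have hPA' : ∀ k, dist (P k) (A (k+1)) = ε/2 := by
    intro k
    refine tendsto_nhds_unique ((hP k).dist (hA (k+1)))
      (Tendsto.congr (fun n => ((P67 (φ n + k)).2).symm) tendsto_const_nhds)
  have hBQ : ∀ k, dist (B k) (Q k) = ε/2 := by
    intro k
    exact squeeze _ _ _ _ ((hB k).dist (hQ k)) (herr k)
      (fun n => P8 (φ n + k)) (fun n => P8' (φ n + k))
  have hQB' : ∀ k, dist (Q k) (B (k+1)) = ε/2 := by
    intro k
    exact squeeze _ _ _ _ ((hQ k).dist (hB (k+1))) (herr k)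
      (fun n => P9 (φ n + k)) (fun n => P9' (φ n + k))
  have hPQ1 : ∀ k, ε ≤ dist (P k) (Q k) := by
    intro k
    exact ge_of_tendsto ((hP k).dist (hQ k))
      (Eventually.of_forall (fun n => (P10 (φ n + k)).1))
  have hPQ2 : ∀ k, dist (P k) (Q k) ≤ r := by
    intro k
    exact le_of_tendsto_of_tendsto' ((hP k).dist (hQ k)) (hdk k)
      (fun n => (P10 (φ n + k)).2)
  -- boundedness
  obtain ⟨Cb, hCb⟩ : ∃ C : ℝ, ∀ x y : K, dist x y ≤ C := by
    have := (isCompact_univ (X := K)).isBounded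
    rw [Metric.isBounded_iff] at this
    obtain ⟨C, hC⟩ := this
    exact ⟨C, fun x y => hC trivial trivial⟩
  rcases lt_or_eq_of_le hrε with hlt | heq
  · -- case ε < r : the lion-position chain
    have hbtwA : ∀ k, LiesBetween (A (k+1)) (A k) (A (k+2)) := by
      intro k
      have h2 := step_lemma hK hconv hε hlt (hAB k) (hAB (k+1)) (hAA k) (hA'B k)
        (hBB k) (hAA (k+1)) (hA'B (k+1))
      unfold LiesBetween
      rw [hAA k, hAA (k+1), h2]
      ring
    have hchain := chain_dist hK hconv A ε hε hAA hbtwA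
    obtain ⟨n, hn⟩ := exists_nat_gt (Cb / ε)
    have : (n:ℝ) * ε ≤ Cb := (hchain n) ▸ hCb (A 0) (A n)
    rw [div_lt_iff₀ hε] at hn
    linarith
  · -- case r = ε : the interleaved chain through midpoints
    have hAeqB : ∀ k, A (k+1) = B k := by
      intro k
      have : dist (A (k+1)) (B k) = 0 := by rw [hA'B k, ← heq]; ring
      exact dist_eq_zero.mp this
    have hPQeq : ∀ k, P (k+1) = Q k := by
      intro k
      have hXbtw : LiesBetween (P (k+1)) (B k) (B (k+1)) := by
        rw [← hAeqB k, ← hAeqB (k+1)]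
        unfold LiesBetween
        rw [hAP (k+1), hPA' (k+1), hAA (k+1)]
        ring
      have hYbtw : LiesBetween (Q k) (B k) (B (k+1)) := by
        unfold LiesBetween
        rw [hBQ k, hQB' k, hBB k]
        ring
      refine eq_of_two_between hK hconv hXbtw hYbtw ?_ ?_ ?_ ?_
      · rw [hBQ k, ← hAeqB k, hAP (k+1)]
      · rw [← hAeqB k, hAP (k+1)]; linarith
      · rw [← hAeqB (k+1), hPA' (k+1)]; linarith
      · rw [hQB' k]; linarith
    have hPP : ∀ k, dist (P k) (P (k+1)) = ε := by
      intro k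
      rw [hPQeq k]
      exact le_antisymm (heq ▸ hPQ2 k) (hPQ1 k)
    set X : ℕ → K := fun n => if n % 2 = 0 then A (n/2) else P (n/2) with hXdef
    have hX1 : ∀ k, X (2*k) = A k := by
      intro k
      simp only [hXdef]
      rw [if_pos (by omega)]
      congr 1
      omega
    have hX2 : ∀ k, X (2*k+1) = P k := by
      intro k
      simp only [hXdef]
      rw [if_neg (by omega)]
      congr 1
      omega
    have hXd : ∀ n, dist (X n) (X (n+1)) = ε/2 := by
      intro n
      obtain ⟨k, hk | hk⟩ : ∃ k, n = 2*k ∨ n = 2*k+1 := ⟨n/2, by omega⟩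
      · subst hk
        rw [hX1 k, hX2 k]
        exact hAP k
      · subst hk
        rw [hX2 k, show 2*k+1+1 = 2*(k+1) by ring, hX1 (k+1)]
        exact hPA' k
    have hXbtw : ∀ n, LiesBetween (X (n+1)) (X n) (X (n+2)) := by
      intro n
      obtain ⟨k, hk | hk⟩ : ∃ k, n = 2*k ∨ n = 2*k+1 := ⟨n/2, by omega⟩
      · subst hk
        unfold LiesBetween
        rw [hX1 k, hX2 k, show 2*k+1+1 = 2*(k+1) by ring, hX1 (k+1),
          hAP k, hPA' k, hAA k]
        ring
      · subst hk
        unfold LiesBetween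
        rw [hX2 k, show 2*k+1+1 = 2*(k+1) by ring, hX1 (k+1),
          show 2*k+1+2 = 2*(k+1)+1 by ring, hX2 (k+1), hPA' k, hAP (k+1), hPP k]
        ring
    have hchain := chain_dist hK hconv X (ε/2) (by linarith) hXd hXbtw
    obtain ⟨n, hn⟩ := exists_nat_gt (Cb / (ε/2))
    have : (n:ℝ) * (ε/2) ≤ Cb := (hchain n) ▸ hCb (X 0) (X n)
    rw [div_lt_iff₀ (by linarith : (0:ℝ) < ε/2)] at hn
    linarith
end
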